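/- arXiv:math/0607026 — 7 statements merged into one kernel-verified Lean document; each statement's English description precedes it below -/
import Mathlib

section
/- Let f1, f2, f3 : [-π, π] → ℝ be measurable functions with 0 < c ≤ f_i(θ) ≤ C almost everywhere for some constants c, C (i = 1, 2, 3). Then the function τ ↦ δ_{a/g}(f1, f2^{1−τ} f3^{τ}) is convex on [0, 1]. -/
open MeasureTheory Real Set ENNReal

section AuxDeltaAG

variable {α : Type*} [MeasurableSpace α] {μ : Measure α}

private lemma deltaAG_aux_integrable [IsFiniteMeasure μ] {g h : α → ℝ} (hg : Measurable g)
    (hh : Measurable h) {c M : ℝ}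
    (hgb : ∀ᵐ θ ∂μ, c ≤ g θ ∧ g θ ≤ M) (hhb : ∀ᵐ θ ∂μ, |h θ| ≤ M)
    (hc : 0 < c) {τ : ℝ} (hτ : |τ| ≤ 1) :
    Integrable (fun θ => g θ * Real.exp (τ * h θ)) μ := by
  refine Integrable.mono' (integrable_const (M * Real.exp M))
    ((hg.mul ((hh.const_mul τ).exp)).aestronglyMeasurable) ?_
  filter_upwards [hgb, hhb] with θ hθ h3
  obtain ⟨h1, h2⟩ := hθ
  have hg0 : 0 ≤ g θ := hc.le.trans h1
  have habs : |τ * h θ| ≤ M := by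
    rw [abs_mul]
    calc |τ| * |h θ| ≤ 1 * M := mul_le_mul hτ h3 (abs_nonneg _) zero_le_one
    _ = M := one_mul M
  rw [Real.norm_eq_abs, abs_mul, abs_of_nonneg hg0, abs_of_nonneg (Real.exp_pos _).le]
  exact mul_le_mul h2 (Real.exp_le_exp.2 ((le_abs_self _).trans habs)) (Real.exp_pos _).le
    (hg0.trans h2)

private lemma deltaAG_aux_pos [IsFiniteMeasure μ] (hμ : μ Set.univ ≠ 0) {g h : α → ℝ}
    (hg : Measurable g) (hh : Measurable h) {c M : ℝ}
    (hgb : ∀ᵐ θ ∂μ, c ≤ g θ ∧ g θ ≤ M) (hhb : ∀ᵐ θ ∂μ, |h θ| ≤ M)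
    (hc : 0 < c) {τ : ℝ} (hτ : |τ| ≤ 1) :
    0 < ∫ θ, g θ * Real.exp (τ * h θ) ∂μ := by
  have hint := deltaAG_aux_integrable hg hh hgb hhb hc hτ
  have hlow : ∀ᵐ θ ∂μ, c * Real.exp (-M) ≤ g θ * Real.exp (τ * h θ) := by
    filter_upwards [hgb, hhb] with θ hθ h3
    have habs : |τ * h θ| ≤ M := by
      rw [abs_mul]
      calc |τ| * |h θ| ≤ 1 * M := mul_le_mul hτ h3 (abs_nonneg _) zero_le_one
      _ = M := one_mul M
    have hM : -M ≤ τ * h θ := by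
      have := neg_abs_le (τ * h θ); linarith
    exact mul_le_mul hθ.1 (Real.exp_le_exp.2 hM) (Real.exp_pos _).le (hc.le.trans hθ.1)
  have hμpos : 0 < (μ Set.univ).toReal := ENNReal.toReal_pos hμ (measure_ne_top μ _)
  calc (0:ℝ) < (c * Real.exp (-M)) * (μ Set.univ).toReal := by positivity
  _ = ∫ _, c * Real.exp (-M) ∂μ := by rw [integral_const, smul_eq_mul, mul_comm]; rfl
  _ ≤ ∫ θ, g θ * Real.exp (τ * h θ) ∂μ := integral_mono_ae (integrable_const _) hint hlow

private lemma deltaAG_aux_convex [IsFiniteMeasure μ] (hμ : μ Set.univ ≠ 0) {g h : α → ℝ}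
    (hg : Measurable g) (hh : Measurable h) {c M : ℝ}
    (hgb : ∀ᵐ θ ∂μ, c ≤ g θ ∧ g θ ≤ M) (hhb : ∀ᵐ θ ∂μ, |h θ| ≤ M)
    (hc : 0 < c) :
    ConvexOn ℝ (Icc (0:ℝ) 1) (fun τ => Real.log (∫ θ, g θ * Real.exp (τ * h θ) ∂μ)) := by
  refine ⟨convex_Icc 0 1, fun x hx y hy a b ha hb hab => ?_⟩
  simp only [smul_eq_mul]
  rcases ha.eq_or_lt with rfl | hapos
  · have hb1 : b = 1 := by linarith
    simp [hb1]
  rcases hb.eq_or_lt with rfl | hbpos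
  · have ha1 : a = 1 := by linarith
    simp [ha1]
  have habs : ∀ t : ℝ, t ∈ Icc (0:ℝ) 1 → |t| ≤ 1 := fun t ht => abs_le.2 ⟨by linarith [ht.1], ht.2⟩
  have hτmem : a * x + b * y ∈ Icc (0:ℝ) 1 := by
    have := (convex_Icc (0:ℝ) 1) hx hy ha hb hab
    simpa using this
  set τ : ℝ := a * x + b * y with hτdef
  set F : ℝ → α → ℝ≥0∞ := fun t θ => ENNReal.ofReal (g θ * Real.exp (t * h θ)) with hF
  have hFmeas : ∀ t : ℝ, Measurable (F t) := fun t =>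
    (hg.mul ((hh.const_mul t).exp)).ennreal_ofReal
  have hnonneg : ∀ t : ℝ, 0 ≤ᵐ[μ] fun θ => g θ * Real.exp (t * h θ) := by
    intro t
    filter_upwards [hgb] with θ hθ
    exact mul_nonneg (hc.le.trans hθ.1) (Real.exp_pos _).le
  have hIeq : ∀ t : ℝ, ∫ θ, g θ * Real.exp (t * h θ) ∂μ = (∫⁻ θ, F t θ ∂μ).toReal := by
    intro t
    rw [integral_eq_lintegral_of_nonneg_ae (hnonneg t)
      (hg.mul ((hh.const_mul t).exp)).aestronglyMeasurable]
  have hJne : ∀ t : ℝ, |t| ≤ 1 → (∫⁻ θ, F t θ ∂μ) ≠ ⊤ := fun t ht =>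
    (MeasureTheory.lintegral_ofReal_ne_top_iff_integrable
      (hg.mul ((hh.const_mul t).exp)).aestronglyMeasurable (hnonneg t)).2
      (deltaAG_aux_integrable hg hh hgb hhb hc ht)
  have hpoint : ∀ᵐ θ ∂μ, F τ θ = F x θ ^ a * F y θ ^ b := by
    filter_upwards [hgb] with θ hθ
    have hgpos : 0 < g θ := hc.trans_le hθ.1
    have e1 : ∀ t : ℝ, g θ * Real.exp (t * h θ) = Real.exp (Real.log (g θ) + t * h θ) := by
      intro t; rw [Real.exp_add, Real.exp_log hgpos]
    have key : g θ * Real.exp (τ * h θ)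
        = (g θ * Real.exp (x * h θ)) ^ a * (g θ * Real.exp (y * h θ)) ^ b := by
      rw [e1, e1, e1, ← Real.exp_mul, ← Real.exp_mul, ← Real.exp_add]
      congr 1
      have hb' : b = 1 - a := by linarith
      subst hb'; ring
    rw [hF]
    simp only
    rw [key, ENNReal.ofReal_mul (Real.rpow_nonneg (by positivity) a),
      ENNReal.ofReal_rpow_of_nonneg (by positivity) ha,
      ENNReal.ofReal_rpow_of_nonneg (by positivity) hb]
  have hpq : (1/a).HolderConjugate (1/b) := by
    rw [Real.holderConjugate_iff]; constructor
    · rw [lt_div_iff₀ hapos, one_mul]; linarith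
    · simp only [one_div, inv_inv]; linarith
  have hholder : (∫⁻ θ, F τ θ ∂μ) ≤ (∫⁻ θ, F x θ ∂μ) ^ a * (∫⁻ θ, F y θ ∂μ) ^ b := by
    calc (∫⁻ θ, F τ θ ∂μ) = ∫⁻ θ, (fun θ => F x θ ^ a) θ * (fun θ => F y θ ^ b) θ ∂μ :=
          lintegral_congr_ae hpoint
    _ ≤ (∫⁻ θ, (F x θ ^ a) ^ (1/a) ∂μ) ^ (1/(1/a)) * (∫⁻ θ, (F y θ ^ b) ^ (1/b) ∂μ) ^ (1/(1/b)) :=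
          ENNReal.lintegral_mul_le_Lp_mul_Lq μ hpq
            ((hFmeas x).pow_const a).aemeasurable ((hFmeas y).pow_const b).aemeasurable
    _ = (∫⁻ θ, F x θ ∂μ) ^ a * (∫⁻ θ, F y θ ∂μ) ^ b := by
          rw [one_div_one_div, one_div_one_div]
          congr 1 <;> congr 1
          · refine lintegral_congr fun θ => ?_
            rw [← ENNReal.rpow_mul, mul_one_div_cancel hapos.ne', ENNReal.rpow_one]
          · refine lintegral_congr fun θ => ?_
            rw [← ENNReal.rpow_mul, mul_one_div_cancel hbpos.ne', ENNReal.rpow_one]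
  have hIx := deltaAG_aux_pos hμ hg hh hgb hhb hc (habs x hx)
  have hIy := deltaAG_aux_pos hμ hg hh hgb hhb hc (habs y hy)
  have hIτ := deltaAG_aux_pos hμ hg hh hgb hhb hc (habs _ hτmem)
  have hreal : ∫ θ, g θ * Real.exp (τ * h θ) ∂μ
      ≤ (∫ θ, g θ * Real.exp (x * h θ) ∂μ) ^ a * (∫ θ, g θ * Real.exp (y * h θ) ∂μ) ^ b := by
    rw [hIeq, hIeq, hIeq, ENNReal.toReal_rpow, ENNReal.toReal_rpow, ← ENNReal.toReal_mul]
    exact ENNReal.toReal_mono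
      (ENNReal.mul_ne_top (ENNReal.rpow_ne_top_of_nonneg ha (hJne x (habs x hx)))
        (ENNReal.rpow_ne_top_of_nonneg hb (hJne y (habs y hy)))) hholder
  calc Real.log (∫ θ, g θ * Real.exp (τ * h θ) ∂μ)
      ≤ Real.log ((∫ θ, g θ * Real.exp (x * h θ) ∂μ) ^ a
          * (∫ θ, g θ * Real.exp (y * h θ) ∂μ) ^ b) := Real.log_le_log hIτ hreal
    _ = a * Real.log (∫ θ, g θ * Real.exp (x * h θ) ∂μ)
          + b * Real.log (∫ θ, g θ * Real.exp (y * h θ) ∂μ) := by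
        rw [Real.log_mul (by positivity) (by positivity), Real.log_rpow hIx, Real.log_rpow hIy]

private lemma deltaAG_aux_affine {s : Set ℝ} (hs : Convex ℝ s) (m k : ℝ) :
    ConvexOn ℝ s (fun τ => m * τ + k) := by
  refine ⟨hs, fun x _ y _ a b ha hb hab => ?_⟩
  simp only [smul_eq_mul]
  exact le_of_eq (by linear_combination (-k) * hab)

end AuxDeltaAG

/-- `δ_{a/g}(f1, f2)`: the logarithm of the ratio of the arithmetic mean over the
geometric mean of `f1/f2` on `[-π, π]` (w.r.t. normalized Lebesgue measure `dθ/2π`). -/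
noncomputable def deltaAG (f1 f2 : ℝ → ℝ) : ℝ :=
  Real.log ((2 * π)⁻¹ * ∫ θ in Icc (-π) π, f1 θ / f2 θ) -
    (2 * π)⁻¹ * ∫ θ in Icc (-π) π, Real.log (f1 θ / f2 θ)

/-- `τ ↦ δ_{a/g}(f1, f2^{1-τ} f3^{τ})` is convex on `[0, 1]`. -/
theorem deltaAG_convexOn (f1 f2 f3 : ℝ → ℝ) (c C : ℝ) (hc : 0 < c)
    (hm1 : Measurable f1) (hm2 : Measurable f2) (hm3 : Measurable f3)
    (hf1 : ∀ᵐ θ ∂(volume.restrict (Icc (-π) π)), c ≤ f1 θ ∧ f1 θ ≤ C)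
    (hf2 : ∀ᵐ θ ∂(volume.restrict (Icc (-π) π)), c ≤ f2 θ ∧ f2 θ ≤ C)
    (hf3 : ∀ᵐ θ ∂(volume.restrict (Icc (-π) π)), c ≤ f3 θ ∧ f3 θ ≤ C) :
    ConvexOn ℝ (Icc (0 : ℝ) 1)
      (fun τ => deltaAG f1 (fun θ => f2 θ ^ (1 - τ) * f3 θ ^ τ)) := by
  set μ : Measure ℝ := volume.restrict (Icc (-π) π) with hμdef
  haveI : IsFiniteMeasure μ := ⟨by
    rw [hμdef, Measure.restrict_apply_univ]; exact measure_Icc_lt_top⟩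
  have hμ : μ Set.univ ≠ 0 := by
    rw [hμdef, Measure.restrict_apply_univ, Real.volume_Icc]
    exact (ENNReal.ofReal_pos.2 (by linarith [Real.pi_pos])).ne'
  have hμ0 : μ ≠ 0 := by
    intro h0
    exact hμ (by rw [h0]; simp)
  haveI : (ae μ).NeBot := MeasureTheory.ae_neBot.2 hμ0
  obtain ⟨θ0, hθ0⟩ := ((hf1.and hf2).and hf3).exists
  have hcC : c ≤ C := hθ0.1.1.1.trans hθ0.1.1.2
  have hC : 0 < C := hc.trans_le hcC
  -- the functions g and h
  set g : ℝ → ℝ := fun θ => f1 θ / f2 θ with hgdef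
  set h : ℝ → ℝ := fun θ => Real.log (f2 θ) - Real.log (f3 θ) with hhdef
  have hgm : Measurable g := hm1.div hm2
  have hhm : Measurable h := hm2.log.sub hm3.log
  set M : ℝ := max (C / c) (Real.log C - Real.log c) with hMdef
  have hcg : 0 < c / C := by positivity
  have hgb : ∀ᵐ θ ∂μ, c / C ≤ g θ ∧ g θ ≤ M := by
    filter_upwards [hf1, hf2] with θ h1 h2
    constructor
    · exact div_le_div₀ (hc.le.trans h1.1) h1.1 (hc.trans_le h2.1) h2.2
    · exact (div_le_div₀ hC.le h1.2 hc h2.1).trans (le_max_left _ _)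
  have hhb : ∀ᵐ θ ∂μ, |h θ| ≤ M := by
    filter_upwards [hf2, hf3] with θ h2 h3
    have l2a : Real.log c ≤ Real.log (f2 θ) := Real.log_le_log hc h2.1
    have l2b : Real.log (f2 θ) ≤ Real.log C := Real.log_le_log (hc.trans_le h2.1) h2.2
    have l3a : Real.log c ≤ Real.log (f3 θ) := Real.log_le_log hc h3.1
    have l3b : Real.log (f3 θ) ≤ Real.log C := Real.log_le_log (hc.trans_le h3.1) h3.2
    have : |h θ| ≤ Real.log C - Real.log c := by
      rw [hhdef]; simp only
      rw [abs_sub_le_iff]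
      constructor <;> linarith
    exact this.trans (le_max_right _ _)
  -- integrability of the logs
  have hlogint : ∀ f : ℝ → ℝ, Measurable f → (∀ᵐ θ ∂μ, c ≤ f θ ∧ f θ ≤ C) →
      Integrable (fun θ => Real.log (f θ)) μ := by
    intro f hf hfb
    refine Integrable.mono' (integrable_const (|Real.log c| + |Real.log C|))
      hf.log.aestronglyMeasurable ?_
    filter_upwards [hfb] with θ hθ
    have l1 : Real.log c ≤ Real.log (f θ) := Real.log_le_log hc hθ.1
    have l2 : Real.log (f θ) ≤ Real.log C := Real.log_le_log (hc.trans_le hθ.1) hθ.2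
    rw [Real.norm_eq_abs, abs_le]
    constructor
    · have := neg_abs_le (Real.log c)
      have := abs_nonneg (Real.log C)
      linarith
    · have := le_abs_self (Real.log C)
      have := abs_nonneg (Real.log c)
      linarith
  have hi1 : Integrable (fun θ => Real.log (f1 θ)) μ := hlogint f1 hm1 hf1
  have hi2 : Integrable (fun θ => Real.log (f2 θ)) μ := hlogint f2 hm2 hf2
  have hi3 : Integrable (fun θ => Real.log (f3 θ)) μ := hlogint f3 hm3 hf3
  set L1 : ℝ := ∫ θ, Real.log (f1 θ) ∂μ with hL1
  set L2 : ℝ := ∫ θ, Real.log (f2 θ) ∂μ with hL2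
  set L3 : ℝ := ∫ θ, Real.log (f3 θ) ∂μ with hL3
  set m : ℝ := -((2 * π)⁻¹ * (L2 - L3)) with hmdef
  set k : ℝ := Real.log (2 * π)⁻¹ - (2 * π)⁻¹ * (L1 - L2) with hkdef
  have hconv := (deltaAG_aux_convex hμ hgm hhm hgb hhb hcg).add
    (deltaAG_aux_affine (convex_Icc (0:ℝ) 1) m k)
  refine hconv.congr fun τ hτmem => ?_
  -- the pointwise equality on Icc 0 1
  have hτabs : |τ| ≤ 1 := abs_le.2 ⟨by linarith [hτmem.1], hτmem.2⟩
  have hIpos := deltaAG_aux_pos hμ hgm hhm hgb hhb hcg hτabs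
  have hint_eq : (∫ θ in Icc (-π) π, f1 θ / (f2 θ ^ (1 - τ) * f3 θ ^ τ))
      = ∫ θ, g θ * Real.exp (τ * h θ) ∂μ := by
    rw [← hμdef]
    refine integral_congr_ae ?_
    filter_upwards [hf1, hf2, hf3] with θ h1 h2 h3
    have h2pos : 0 < f2 θ := hc.trans_le h2.1
    have h3pos : 0 < f3 θ := hc.trans_le h3.1
    have e2 : Real.exp (τ * (Real.log (f2 θ) - Real.log (f3 θ)))
        * (Real.exp (Real.log (f2 θ) * (1 - τ)) * Real.exp (Real.log (f3 θ) * τ)) = f2 θ := by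
      rw [← Real.exp_add, ← Real.exp_add]
      conv_rhs => rw [← Real.exp_log h2pos]
      congr 1; ring
    rw [hgdef, hhdef]
    simp only
    rw [Real.rpow_def_of_pos h2pos, Real.rpow_def_of_pos h3pos,
      div_eq_iff (by positivity), div_mul_eq_mul_div, div_mul_eq_mul_div,
      eq_comm, div_eq_iff h2pos.ne']
    linear_combination f1 θ * e2
  have hlog_eq : (∫ θ in Icc (-π) π, Real.log (f1 θ / (f2 θ ^ (1 - τ) * f3 θ ^ τ)))
      = L1 - ((1 - τ) * L2 + τ * L3) := by
    rw [← hμdef]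
    have hae : (fun θ => Real.log (f1 θ / (f2 θ ^ (1 - τ) * f3 θ ^ τ)))
        =ᵐ[μ] fun θ => Real.log (f1 θ)
          - ((1 - τ) * Real.log (f2 θ) + τ * Real.log (f3 θ)) := by
      filter_upwards [hf1, hf2, hf3] with θ h1 h2 h3
      have h1pos : 0 < f1 θ := hc.trans_le h1.1
      have h2pos : 0 < f2 θ := hc.trans_le h2.1
      have h3pos : 0 < f3 θ := hc.trans_le h3.1
      rw [Real.log_div h1pos.ne' (by positivity),
        Real.log_mul (by positivity) (by positivity),
        Real.log_rpow h2pos, Real.log_rpow h3pos]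
    have hg24 : Integrable (fun θ => (1 - τ) * Real.log (f2 θ) + τ * Real.log (f3 θ)) μ :=
      (hi2.const_mul _).add (hi3.const_mul _)
    rw [integral_congr_ae hae, integral_sub hi1 hg24,
      integral_add (hi2.const_mul (1 - τ)) (hi3.const_mul τ),
      integral_const_mul, integral_const_mul]
  show Real.log (∫ θ, g θ * Real.exp (τ * h θ) ∂μ) + (m * τ + k)
      = deltaAG f1 fun θ => f2 θ ^ (1 - τ) * f3 θ ^ τ
  simp only [deltaAG]
  rw [hint_eq, hlog_eq, Real.log_mul (inv_ne_zero (by positivity)) hIpos.ne', hmdef, hkdef]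
  ring
end

section
/- Let f1, fb : [-π, π] → ℝ be measurable functions with 0 < c ≤ f1(θ), fb(θ) ≤ C almost everywhere for some constants c, C. Then the function τ ↦ δ_{a/g}(f1, f1^{1−τ} fb^{τ}) is monotonically increasing for τ ∈ [0, 1]. -/
open MeasureTheory Real Set

lemma muπ_ne_zero : NeZero ((volume : Measure ℝ).restrict (Icc (-π) π)) := by
  constructor
  intro h
  have h1 : (volume : Measure ℝ).restrict (Icc (-π) π) Set.univ = 0 := by rw [h]; rfl
  rw [Measure.restrict_apply_univ, Real.volume_Icc] at h1
  have hpi : (0:ℝ) < π - -π := by have := Real.pi_pos; linarith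
  exact absurd h1 (ne_of_gt (ENNReal.ofReal_pos.2 hpi))

lemma muπ_univ_toReal :
    (((volume : Measure ℝ).restrict (Icc (-π) π)) Set.univ).toReal = 2 * π := by
  rw [Measure.restrict_apply_univ, Real.volume_Icc,
    ENNReal.toReal_ofReal (by have := Real.pi_pos; linarith)]
  ring

/-- `τ ↦ δ_{a/g}(f1, f1^{1-τ} fb^{τ})` is monotonically increasing on `[0, 1]`. -/
theorem deltaAG_monotoneOn (f1 fb : ℝ → ℝ) (c C : ℝ) (hc : 0 < c)
    (hm1 : Measurable f1) (hmb : Measurable fb)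
    (hf1 : ∀ᵐ θ ∂(volume.restrict (Icc (-π) π)), c ≤ f1 θ ∧ f1 θ ≤ C)
    (hfb : ∀ᵐ θ ∂(volume.restrict (Icc (-π) π)), c ≤ fb θ ∧ fb θ ≤ C) :
    MonotoneOn (fun τ => deltaAG f1 (fun θ => f1 θ ^ (1 - τ) * fb θ ^ τ))
      (Icc (0 : ℝ) 1) := by
  haveI : NeZero ((volume : Measure ℝ).restrict (Icc (-π) π)) := muπ_ne_zero
  set μ := (volume : Measure ℝ).restrict (Icc (-π) π) with hμdef
  -- average vs integral
  have havg : ∀ f : ℝ → ℝ, ⨍ θ, f θ ∂μ = (2 * π)⁻¹ * ∫ θ, f θ ∂μ := by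
    intro f
    rw [average_eq, measureReal_def, muπ_univ_toReal, smul_eq_mul]
  have hπ : (0:ℝ) < 2 * π := by have := Real.pi_pos; linarith
  -- C is positive
  obtain ⟨θ₀, hθ₀⟩ := hf1.exists
  have hC : 0 < C := lt_of_lt_of_le hc (le_trans hθ₀.1 hθ₀.2)
  -- the ratio g and its bounds
  set g : ℝ → ℝ := fun θ => f1 θ / fb θ with hgdef
  have hgm : Measurable g := hm1.div hmb
  have hcCpos : 0 < c / C := div_pos hc hC
  have hCcpos : 0 < C / c := div_pos hC hc
  have hgb : ∀ᵐ θ ∂μ, c / C ≤ g θ ∧ g θ ≤ C / c := by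
    filter_upwards [hf1, hfb] with θ h1 hb
    have hf1p : 0 < f1 θ := lt_of_lt_of_le hc h1.1
    have hfbp : 0 < fb θ := lt_of_lt_of_le hc hb.1
    exact ⟨div_le_div₀ hf1p.le h1.1 hfbp hb.2, div_le_div₀ hC.le h1.2 hc hb.1⟩
  -- log g is integrable
  have hKlog : ∀ᵐ θ ∂μ, ‖Real.log (g θ)‖ ≤ max |Real.log (c / C)| |Real.log (C / c)| := by
    filter_upwards [hgb] with θ hθ
    have hgp : 0 < g θ := lt_of_lt_of_le hcCpos hθ.1
    have h1 : Real.log (c / C) ≤ Real.log (g θ) := (Real.log_le_log_iff hcCpos hgp).2 hθ.1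
    have h2 : Real.log (g θ) ≤ Real.log (C / c) := (Real.log_le_log_iff hgp hCcpos).2 hθ.2
    rw [Real.norm_eq_abs, abs_le]
    constructor
    · have := neg_abs_le (Real.log (c / C))
      have := le_max_left |Real.log (c / C)| |Real.log (C / c)|
      linarith
    · have := le_abs_self (Real.log (C / c))
      have := le_max_right |Real.log (c / C)| |Real.log (C / c)|
      linarith
  have hLg_int : Integrable (fun θ => Real.log (g θ)) μ :=
    (integrable_const _).mono' ((hgm.log).aestronglyMeasurable) hKlog
  -- the mean of log g, and the normalized function h
  set L : ℝ := ⨍ θ, Real.log (g θ) ∂μ with hLdef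
  set h : ℝ → ℝ := fun θ => g θ * Real.exp (-L) with hhdef
  have hhm : Measurable h := hgm.mul_const _
  set m : ℝ := c / C * Real.exp (-L) with hmdef
  set M : ℝ := C / c * Real.exp (-L) with hMdef
  have hm0 : 0 < m := mul_pos hcCpos (Real.exp_pos _)
  have hhb : ∀ᵐ θ ∂μ, m ≤ h θ ∧ h θ ≤ M := by
    filter_upwards [hgb] with θ hθ
    exact ⟨mul_le_mul_of_nonneg_right hθ.1 (Real.exp_pos _).le,
      mul_le_mul_of_nonneg_right hθ.2 (Real.exp_pos _).le⟩
  -- log h = log g - L a.e., and its average is 0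
  have hlogh : ∀ᵐ θ ∂μ, Real.log (h θ) = Real.log (g θ) - L := by
    filter_upwards [hgb] with θ hθ
    have hgp : 0 < g θ := lt_of_lt_of_le hcCpos hθ.1
    rw [hhdef]
    rw [Real.log_mul (ne_of_gt hgp) (Real.exp_ne_zero _), Real.log_exp]
    ring
  have hlogh_int : Integrable (fun θ => Real.log (h θ)) μ :=
    (hLg_int.sub (integrable_const L)).congr (hlogh.mono fun θ hθ => hθ.symm)
  have havg_logh : ⨍ θ, Real.log (h θ) ∂μ = 0 := by
    rw [average_congr hlogh, havg, integral_sub hLg_int (integrable_const L),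
      integral_const, measureReal_def, muπ_univ_toReal, smul_eq_mul, mul_sub, ← havg, ← hLdef]
    field_simp
    ring
  -- boundedness and integrability of h ^ t for t ∈ [0,1]
  have hbd : ∀ t ∈ Icc (0:ℝ) 1, ∀ᵐ θ ∂μ, ‖h θ ^ t‖ ≤ max 1 M := by
    intro t ht
    filter_upwards [hhb] with θ hθ
    have h0 : 0 ≤ h θ := le_trans hm0.le hθ.1
    rw [Real.norm_eq_abs, abs_of_nonneg (Real.rpow_nonneg h0 t)]
    calc h θ ^ t ≤ (max 1 M) ^ t :=
          Real.rpow_le_rpow h0 (le_trans hθ.2 (le_max_right 1 M)) ht.1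
      _ ≤ (max 1 M) ^ (1:ℝ) :=
          Real.rpow_le_rpow_of_exponent_le (le_max_left 1 M) ht.2
      _ = max 1 M := Real.rpow_one _
  have hmono : ∀ t : ℝ, 0 ≤ t → Measurable (fun θ => h θ ^ t) := by
    intro t ht
    have : Continuous (fun x : ℝ => x ^ t) := by
      rw [continuous_iff_continuousAt]
      exact fun x => Real.continuousAt_rpow_const x t (Or.inr ht)
    exact this.measurable.comp hhm
  have hint : ∀ t ∈ Icc (0:ℝ) 1, Integrable (fun θ => h θ ^ t) μ := by
    intro t ht
    exact (integrable_const _).mono' ((hmono t ht.1).aestronglyMeasurable) (hbd t ht)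
  -- Jensen: 1 ≤ ⨍ h^t
  have hJ1 : ∀ t ∈ Icc (0:ℝ) 1, 1 ≤ ⨍ θ, h θ ^ t ∂μ := by
    intro t ht
    have hcongr : ∀ᵐ θ ∂μ, Real.exp (t * Real.log (h θ)) = h θ ^ t := by
      filter_upwards [hhb] with θ hθ
      have hp : 0 < h θ := lt_of_lt_of_le hm0 hθ.1
      rw [Real.rpow_def_of_pos hp, mul_comm]
    have hfi : Integrable (fun θ => t * Real.log (h θ)) μ := hlogh_int.const_mul t
    have hgi : Integrable (fun θ => Real.exp (t * Real.log (h θ))) μ :=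
      (hint t ht).congr (hcongr.mono fun θ hθ => hθ.symm)
    have := convexOn_exp.map_average_le continuous_exp.continuousOn isClosed_univ
      (Filter.Eventually.of_forall fun θ => mem_univ _) hfi hgi
    have havgt : ⨍ θ, t * Real.log (h θ) ∂μ = 0 := by
      rw [havg, integral_const_mul, ← mul_assoc, mul_comm ((2*π)⁻¹) t, mul_assoc,
        ← havg, havg_logh, mul_zero]
    rw [havgt, Real.exp_zero] at this
    calc (1:ℝ) ≤ ⨍ θ, Real.exp (t * Real.log (h θ)) ∂μ := this
      _ = ⨍ θ, h θ ^ t ∂μ := average_congr hcongr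
  -- key monotonicity of t ↦ ⨍ h^t
  have hkey : ∀ s ∈ Icc (0:ℝ) 1, ∀ t ∈ Icc (0:ℝ) 1, s ≤ t →
      ⨍ θ, h θ ^ s ∂μ ≤ ⨍ θ, h θ ^ t ∂μ := by
    intro s hs t ht hst
    rcases eq_or_lt_of_le hs.1 with hs0 | hs0
    · have : ⨍ θ, h θ ^ s ∂μ = 1 := by
        rw [← hs0]
        simp [Real.rpow_zero, average_const]
      rw [this]
      exact hJ1 t ht
    · set p : ℝ := t / s with hpdef
      have hp1 : 1 ≤ p := (one_le_div hs0).2 hst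
      have hcont : ContinuousOn (fun x : ℝ => x ^ p) (Ici 0) := fun x _ =>
        (Real.continuousAt_rpow_const x p (Or.inr (by linarith))).continuousWithinAt
      have hmem : ∀ᵐ θ ∂μ, h θ ^ s ∈ Ici (0:ℝ) := by
        filter_upwards [hhb] with θ hθ
        exact Real.rpow_nonneg (le_trans hm0.le hθ.1) s
      have hcongr : ∀ᵐ θ ∂μ, (h θ ^ s) ^ p = h θ ^ t := by
        filter_upwards [hhb] with θ hθ
        have h0 : 0 ≤ h θ := le_trans hm0.le hθ.1
        rw [← Real.rpow_mul h0, mul_div_cancel₀ t (ne_of_gt hs0)]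
      have hgi : Integrable (fun θ => (h θ ^ s) ^ p) μ :=
        (hint t ht).congr (hcongr.mono fun θ hθ => hθ.symm)
      have hJ2 := (convexOn_rpow hp1).map_average_le hcont isClosed_Ici hmem (hint s hs) hgi
      have hJ2' : (⨍ θ, h θ ^ s ∂μ) ^ p ≤ ⨍ θ, h θ ^ t ∂μ := by
        calc (⨍ θ, h θ ^ s ∂μ) ^ p ≤ ⨍ θ, (h θ ^ s) ^ p ∂μ := hJ2
          _ = ⨍ θ, h θ ^ t ∂μ := average_congr hcongr
      calc ⨍ θ, h θ ^ s ∂μ = (⨍ θ, h θ ^ s ∂μ) ^ (1:ℝ) := (Real.rpow_one _).symm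
        _ ≤ (⨍ θ, h θ ^ s ∂μ) ^ p :=
            Real.rpow_le_rpow_of_exponent_le (hJ1 s hs) hp1
        _ ≤ ⨍ θ, h θ ^ t ∂μ := hJ2'
  -- rewrite deltaAG in terms of h
  have hrw : ∀ τ ∈ Icc (0:ℝ) 1,
      deltaAG f1 (fun θ => f1 θ ^ (1 - τ) * fb θ ^ τ) = Real.log (⨍ θ, h θ ^ τ ∂μ) := by
    intro τ hτ
    have hpt : ∀ᵐ θ ∂μ, f1 θ / (f1 θ ^ (1 - τ) * fb θ ^ τ) = Real.exp (τ * L) * h θ ^ τ := by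
      filter_upwards [hf1, hfb, hgb] with θ h1 hb hg
      have hf1p : 0 < f1 θ := lt_of_lt_of_le hc h1.1
      have hfbp : 0 < fb θ := lt_of_lt_of_le hc hb.1
      have hgp : 0 < g θ := lt_of_lt_of_le hcCpos hg.1
      have key : f1 θ / (f1 θ ^ (1 - τ) * fb θ ^ τ) = g θ ^ τ := by
        rw [hgdef]
        rw [Real.div_rpow hf1p.le hfbp.le]
        rw [div_eq_div_iff (by positivity) (by positivity)]
        have : f1 θ ^ τ * f1 θ ^ (1 - τ) = f1 θ := by
          rw [← Real.rpow_add hf1p]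
          norm_num
        calc f1 θ * fb θ ^ τ = (f1 θ ^ τ * f1 θ ^ (1 - τ)) * fb θ ^ τ := by rw [this]
          _ = f1 θ ^ τ * (f1 θ ^ (1 - τ) * fb θ ^ τ) := by ring
      rw [key]
      have : g θ ^ τ = (h θ * Real.exp L) ^ τ := by
        rw [hhdef]
        congr 1
        rw [mul_assoc, ← Real.exp_add]
        simp
      rw [this, Real.mul_rpow (by positivity) (Real.exp_pos L).le, ← Real.exp_mul,
        mul_comm L τ]
      ring
    have hptlog : ∀ᵐ θ ∂μ, Real.log (f1 θ / (f1 θ ^ (1 - τ) * fb θ ^ τ)) =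
        τ * Real.log (g θ) := by
      filter_upwards [hpt, hgb] with θ hθ hg
      have hgp : 0 < g θ := lt_of_lt_of_le hcCpos hg.1
      have hhp : 0 < h θ := by
        rw [hhdef]; positivity
      rw [hθ, Real.log_mul (Real.exp_ne_zero _) (ne_of_gt (Real.rpow_pos_of_pos hhp τ)),
        Real.log_exp, Real.log_rpow hhp]
      have : Real.log (h θ) = Real.log (g θ) - L := by
        rw [hhdef, Real.log_mul (ne_of_gt hgp) (Real.exp_ne_zero _), Real.log_exp]
        ring
      rw [this]
      ring
    have hApos : 0 < ⨍ θ, h θ ^ τ ∂μ := lt_of_lt_of_le one_pos (hJ1 τ hτ)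
    have hI1 : ∫ θ, f1 θ / (f1 θ ^ (1 - τ) * fb θ ^ τ) ∂μ =
        Real.exp (τ * L) * ∫ θ, h θ ^ τ ∂μ := by
      rw [integral_congr_ae hpt, integral_const_mul]
    have hI2 : ∫ θ, Real.log (f1 θ / (f1 θ ^ (1 - τ) * fb θ ^ τ)) ∂μ =
        τ * ∫ θ, Real.log (g θ) ∂μ := by
      rw [integral_congr_ae hptlog, integral_const_mul]
    show Real.log ((2 * π)⁻¹ * ∫ θ in Icc (-π) π, f1 θ / (f1 θ ^ (1 - τ) * fb θ ^ τ)) -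
        (2 * π)⁻¹ * ∫ θ in Icc (-π) π, Real.log (f1 θ / (f1 θ ^ (1 - τ) * fb θ ^ τ)) =
        Real.log (⨍ θ, h θ ^ τ ∂μ)
    rw [show (∫ θ in Icc (-π) π, f1 θ / (f1 θ ^ (1 - τ) * fb θ ^ τ)) =
        ∫ θ, f1 θ / (f1 θ ^ (1 - τ) * fb θ ^ τ) ∂μ from rfl, hI1]
    rw [show (∫ θ in Icc (-π) π, Real.log (f1 θ / (f1 θ ^ (1 - τ) * fb θ ^ τ))) =
        ∫ θ, Real.log (f1 θ / (f1 θ ^ (1 - τ) * fb θ ^ τ)) ∂μ from rfl, hI2]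
    rw [← mul_assoc, mul_comm ((2 * π)⁻¹) (Real.exp (τ * L)), mul_assoc, ← havg]
    rw [Real.log_mul (Real.exp_ne_zero _) (ne_of_gt hApos), Real.log_exp]
    have : (2 * π)⁻¹ * (τ * ∫ θ, Real.log (g θ) ∂μ) = τ * L := by
      rw [hLdef, havg]; ring
    rw [this]
    ring
  -- conclude
  intro σ hσ τ hτ hστ
  have h1 := hrw σ hσ
  have h2 := hrw τ hτ
  simp only at h1 h2 ⊢
  rw [h1, h2]
  exact (Real.log_le_log_iff (lt_of_lt_of_le one_pos (hJ1 σ hσ))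
    (lt_of_lt_of_le one_pos (hJ1 τ hτ))).2 (hkey σ hσ τ hτ hστ)
end

section
/- Let f1, f2 : [-π, π] → ℝ be measurable functions with 0 < c ≤ f_i(θ) ≤ C almost everywhere for some constants c, C (i = 1, 2). Then δ(f1, f2) ≥ 0, and δ(f1, f2) = 0 if and only if the ratio f1(θ)/f2(θ) is constant almost everywhere on [-π, π]. -/
open MeasureTheory Real Set

/-- The symmetrized distance `δ(f1, f2) := δ_{a/g}(f1, f2) + δ_{a/g}(f2, f1)`. -/
noncomputable def deltaSym (f1 f2 : ℝ → ℝ) : ℝ :=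
  deltaAG f1 f2 + deltaAG f2 f1

section Aux

local notation "μπ" => MeasureTheory.volume.restrict (Icc (-π) π)

lemma muπ_univ : μπ Set.univ = ENNReal.ofReal (2 * π) := by
  rw [Measure.restrict_apply_univ, Real.volume_Icc]
  congr 1
  ring

instance : IsFiniteMeasure μπ :=
  ⟨by rw [muπ_univ]; exact ENNReal.ofReal_lt_top⟩

lemma muπ_ne_zero_s7 : μπ ≠ 0 := by
  intro h
  have h2 := muπ_univ
  rw [h] at h2
  simp only [Measure.coe_zero, Pi.zero_apply] at h2
  rw [eq_comm, ENNReal.ofReal_eq_zero] at h2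
  nlinarith [pi_pos]

instance : NeZero μπ := ⟨muπ_ne_zero_s7⟩

lemma avg_eq (f : ℝ → ℝ) :
    ⨍ θ, f θ ∂μπ = (2 * π)⁻¹ * ∫ θ in Icc (-π) π, f θ := by
  rw [average_eq, measureReal_def, muπ_univ, ENNReal.toReal_ofReal (by linarith [pi_pos])]
  simp [smul_eq_mul]

lemma integrable_of_ae_bound {f : ℝ → ℝ} (M : ℝ) (hm : Measurable f)
    (h : ∀ᵐ θ ∂μπ, ‖f θ‖ ≤ M) : Integrable f μπ :=
  (integrable_const M).mono' hm.aestronglyMeasurable h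

/-- Key Jensen lemma for `log` on `[-π,π]`. -/
lemma jensen_log (g : ℝ → ℝ) (a b : ℝ) (ha : 0 < a) (hmg : Measurable g)
    (hg : ∀ᵐ θ ∂μπ, g θ ∈ Icc a b) :
    (2 * π)⁻¹ * ∫ θ in Icc (-π) π, Real.log (g θ) ≤
      Real.log ((2 * π)⁻¹ * ∫ θ in Icc (-π) π, g θ) ∧
    (Real.log ((2 * π)⁻¹ * ∫ θ in Icc (-π) π, g θ) ≤
        (2 * π)⁻¹ * ∫ θ in Icc (-π) π, Real.log (g θ) →
      ∃ k : ℝ, ∀ᵐ θ ∂μπ, g θ = k) := by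
  have hsub : Icc a b ⊆ Ioi (0:ℝ) := fun x hx => lt_of_lt_of_le ha hx.1
  have hconc : StrictConcaveOn ℝ (Icc a b) Real.log :=
    strictConcaveOn_log_Ioi.subset hsub (convex_Icc a b)
  have hcont : ContinuousOn Real.log (Icc a b) := fun x hx =>
    (Real.continuousAt_log (ne_of_gt (hsub hx))).continuousWithinAt
  have hgi : Integrable g μπ := by
    refine integrable_of_ae_bound b hmg ?_
    filter_upwards [hg] with θ hθ
    rw [Real.norm_eq_abs, abs_of_pos (lt_of_lt_of_le ha hθ.1)]
    exact hθ.2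
  have hlgi : Integrable (Real.log ∘ g) μπ := by
    refine integrable_of_ae_bound (max |Real.log a| |Real.log b|) (Real.measurable_log.comp hmg) ?_
    filter_upwards [hg] with θ hθ
    exact abs_le_max_abs_abs (Real.log_le_log ha hθ.1)
      (Real.log_le_log_iff (lt_of_lt_of_le ha hθ.1) (lt_of_lt_of_le (lt_of_lt_of_le ha hθ.1) hθ.2) |>.2 hθ.2)
  have hdich := hconc.ae_eq_const_or_lt_map_average hcont isClosed_Icc hg hgi hlgi
  have havg1 : ⨍ θ, g θ ∂μπ = (2 * π)⁻¹ * ∫ θ in Icc (-π) π, g θ := avg_eq g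
  have havg2 : ⨍ θ, Real.log (g θ) ∂μπ =
      (2 * π)⁻¹ * ∫ θ in Icc (-π) π, Real.log (g θ) := avg_eq _
  constructor
  · rcases hdich with h | h
    · -- g is a.e. constant; equality
      have hk : ∀ᵐ θ ∂μπ, g θ = ⨍ x, g x ∂μπ := h
      haveI : (ae μπ).NeBot := ae_neBot.2 muπ_ne_zero_s7
      obtain ⟨θ₀, hθ₀, hθmem⟩ := (hk.and hg).exists
      -- ⨍ log g = log ⨍ g
      have hℓ : ∀ᵐ θ ∂μπ, Real.log (g θ) = Real.log (⨍ x, g x ∂μπ) := by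
        filter_upwards [hk] with θ hθ; rw [hθ]
      have : ⨍ θ, Real.log (g θ) ∂μπ = Real.log (⨍ x, g x ∂μπ) := by
        rw [average_congr hℓ, average_const]
      rw [← havg1, ← havg2, this]
    · rw [← havg1, ← havg2]
      exact le_of_lt h
  · intro hle
    rcases hdich with h | h
    · exact ⟨_, h⟩
    · exfalso
      rw [← havg1, ← havg2] at hle
      exact absurd hle (not_le.2 h)
  
lemma deltaAG_eq_zero_of_const (f1 f2 : ℝ → ℝ) (a b k : ℝ) (ha : 0 < a)
    (hg : ∀ᵐ θ ∂μπ, f1 θ / f2 θ ∈ Icc a b)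
    (hk : ∀ᵐ θ ∂μπ, f1 θ / f2 θ = k) : deltaAG f1 f2 = 0 := by
  have hkmem : k ∈ Icc a b := by
    haveI : (ae μπ).NeBot := ae_neBot.2 muπ_ne_zero_s7
    obtain ⟨θ₀, h1, h2⟩ := (hk.and hg).exists
    rwa [h1] at h2
  have h2π : (0:ℝ) < 2 * π := by positivity
  have hint : ∫ θ in Icc (-π) π, f1 θ / f2 θ = 2 * π * k := by
    rw [integral_congr_ae hk, setIntegral_const, measureReal_def, Real.volume_Icc, smul_eq_mul,
      ENNReal.toReal_ofReal (by linarith [pi_pos])]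
    ring
  have hintl : ∫ θ in Icc (-π) π, Real.log (f1 θ / f2 θ) = 2 * π * Real.log k := by
    rw [integral_congr_ae ((hk.mono fun θ h => by rw [h]) :
        ∀ᵐ θ ∂μπ, Real.log (f1 θ / f2 θ) = Real.log k),
      setIntegral_const, measureReal_def, Real.volume_Icc, smul_eq_mul,
      ENNReal.toReal_ofReal (by linarith [pi_pos])]
    ring
  unfold deltaAG
  rw [hint, hintl, inv_mul_cancel_left₀ (ne_of_gt h2π), inv_mul_cancel_left₀ (ne_of_gt h2π)]
  ring

end Aux

/-- `δ(f1, f2) ≥ 0`, with equality iff `f1/f2` is constant a.e. on `[-π, π]`. -/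
theorem deltaSym_nonneg_and_eq_zero_iff (f1 f2 : ℝ → ℝ) (c C : ℝ) (hc : 0 < c)
    (hm1 : Measurable f1) (hm2 : Measurable f2)
    (hf1 : ∀ᵐ θ ∂(volume.restrict (Icc (-π) π)), c ≤ f1 θ ∧ f1 θ ≤ C)
    (hf2 : ∀ᵐ θ ∂(volume.restrict (Icc (-π) π)), c ≤ f2 θ ∧ f2 θ ≤ C) :
    0 ≤ deltaSym f1 f2 ∧
      (deltaSym f1 f2 = 0 ↔
        ∃ k : ℝ, ∀ᵐ θ ∂(volume.restrict (Icc (-π) π)), f1 θ / f2 θ = k) := by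
  have hC : 0 < C := by
    haveI : (ae (volume.restrict (Icc (-π) π))).NeBot := ae_neBot.2 muπ_ne_zero_s7
    obtain ⟨θ₀, h1, h2⟩ := hf1.exists
    linarith
  have ha : 0 < c / C := div_pos hc hC
  -- bounds for the ratios
  have hbound : ∀ {u v : ℝ → ℝ},
      (∀ᵐ θ ∂(volume.restrict (Icc (-π) π)), c ≤ u θ ∧ u θ ≤ C) →
      (∀ᵐ θ ∂(volume.restrict (Icc (-π) π)), c ≤ v θ ∧ v θ ≤ C) →
      ∀ᵐ θ ∂(volume.restrict (Icc (-π) π)), u θ / v θ ∈ Icc (c / C) (C / c) := by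
    intro u v hu hv
    filter_upwards [hu, hv] with θ ⟨hu1, hu2⟩ ⟨hv1, hv2⟩
    have hv0 : 0 < v θ := lt_of_lt_of_le hc hv1
    constructor
    · exact div_le_div₀ (hc.le.trans hu1) hu1 hv0 hv2
    · exact div_le_div₀ hC.le hu2 hc hv1
  have hg12 := hbound hf1 hf2
  have hg21 := hbound hf2 hf1
  have hj12 := jensen_log (fun θ => f1 θ / f2 θ) (c / C) (C / c) ha (hm1.div hm2) hg12
  have hj21 := jensen_log (fun θ => f2 θ / f1 θ) (c / C) (C / c) ha (hm2.div hm1) hg21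
  have h12 : 0 ≤ deltaAG f1 f2 := by unfold deltaAG; linarith [hj12.1]
  have h21 : 0 ≤ deltaAG f2 f1 := by unfold deltaAG; linarith [hj21.1]
  refine ⟨by unfold deltaSym; linarith, ?_, ?_⟩
  · intro hzero
    have h12z : deltaAG f1 f2 = 0 := by unfold deltaSym at hzero; linarith
    have : Real.log ((2 * π)⁻¹ * ∫ θ in Icc (-π) π, f1 θ / f2 θ) ≤
        (2 * π)⁻¹ * ∫ θ in Icc (-π) π, Real.log (f1 θ / f2 θ) := by
      unfold deltaAG at h12z; linarith
    exact hj12.2 this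
  · rintro ⟨k, hk⟩
    have hk' : ∀ᵐ θ ∂(volume.restrict (Icc (-π) π)), f2 θ / f1 θ = k⁻¹ := by
      filter_upwards [hk] with θ hθ
      rw [← inv_div, hθ]
    have e1 : deltaAG f1 f2 = 0 := deltaAG_eq_zero_of_const f1 f2 _ _ k ha hg12 hk
    have e2 : deltaAG f2 f1 = 0 := deltaAG_eq_zero_of_const f2 f1 _ _ k⁻¹ ha hg21 hk'
    unfold deltaSym
    rw [e1, e2, add_zero]
end

section
/- Let f1, f2, f3 : [-π, π] → ℝ be measurable functions with 0 < c ≤ f_i(θ) ≤ C almost everywhere for some constants c, C (i = 1, 2, 3). Then the function τ ↦ δ(f1, f2^{1−τ} f3^{τ}) is convex on [0, 1]. -/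
open MeasureTheory Real Set

lemma mu_univ_eq : (volume.restrict (Icc (-π) π)) Set.univ = ENNReal.ofReal (2 * π) := by
  rw [Measure.restrict_apply_univ, Real.volume_Icc]
  congr 1
  ring

/-- Key convexity lemma: `τ ↦ log ((2π)⁻¹ ∫ h e^{τ u})` is convex, assuming
two-sided bounds on `h` and `u`. -/
lemma convexOn_log_int (h u : ℝ → ℝ) (hh : Measurable h) (hu : Measurable u)
    (m M B : ℝ) (hm : 0 < m)
    (hbd : ∀ᵐ θ ∂(volume.restrict (Icc (-π) π)), m ≤ h θ ∧ h θ ≤ M ∧ |u θ| ≤ B) :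
    ConvexOn ℝ univ (fun τ => Real.log ((2 * π)⁻¹ *
      ∫ θ in Icc (-π) π, h θ * Real.exp (τ * u θ))) := by
  set μ := volume.restrict (Icc (-π) π) with hμ
  have hπ : (0:ℝ) < 2 * π := by positivity
  haveI : IsFiniteMeasure μ := ⟨by rw [mu_univ_eq]; exact ENNReal.ofReal_lt_top⟩
  have hmeas : ∀ τ : ℝ, Measurable fun θ => h θ * Real.exp (τ * u θ) :=
    fun τ => hh.mul ((measurable_const.mul hu).exp)
  -- integrability
  have hint : ∀ τ : ℝ, Integrable (fun θ => h θ * Real.exp (τ * u θ)) μ := by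
    intro τ
    refine (integrable_const (M * Real.exp (|τ| * B))).mono'
      (hmeas τ).aestronglyMeasurable ?_
    filter_upwards [hbd] with θ ⟨h1, h2, h3⟩
    have hhpos : 0 < h θ := hm.trans_le h1
    have hexp : τ * u θ ≤ |τ| * B := by
      calc τ * u θ ≤ |τ * u θ| := le_abs_self _
        _ = |τ| * |u θ| := abs_mul _ _
        _ ≤ |τ| * B := mul_le_mul_of_nonneg_left h3 (abs_nonneg τ)
    rw [Real.norm_eq_abs, abs_mul, abs_of_pos hhpos, abs_of_pos (Real.exp_pos _)]
    exact mul_le_mul h2 (Real.exp_le_exp.2 hexp) (Real.exp_pos _).le (hm.le.trans (h1.trans h2))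
  -- positivity of the integrals
  have hpos : ∀ τ : ℝ, 0 < ∫ θ in Icc (-π) π, h θ * Real.exp (τ * u θ) := by
    intro τ
    have hε : (0:ℝ) < m * Real.exp (-(|τ| * B)) := by positivity
    have hlow : ∀ᵐ θ ∂μ, m * Real.exp (-(|τ| * B)) ≤ h θ * Real.exp (τ * u θ) := by
      filter_upwards [hbd] with θ ⟨h1, h2, h3⟩
      have : -(|τ| * B) ≤ τ * u θ := by
        have : |τ * u θ| ≤ |τ| * B := by
          rw [abs_mul]; exact mul_le_mul_of_nonneg_left h3 (abs_nonneg τ)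
        linarith [neg_abs_le (τ * u θ)]
      exact mul_le_mul h1 (Real.exp_le_exp.2 this) (Real.exp_pos _).le (hm.le.trans h1)
    have hmono := integral_mono_ae (integrable_const _) (hint τ) hlow
    have hconst : ∫ _ : ℝ, (m * Real.exp (-(|τ| * B))) ∂μ
        = (2 * π) * (m * Real.exp (-(|τ| * B))) := by
      rw [integral_const, measureReal_def, mu_univ_eq, ENNReal.toReal_ofReal hπ.le, smul_eq_mul]
    calc (0:ℝ) < (2 * π) * (m * Real.exp (-(|τ| * B))) := by positivity
      _ = ∫ _ : ℝ, (m * Real.exp (-(|τ| * B))) ∂μ := hconst.symm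
      _ ≤ _ := hmono
  refine ⟨convex_univ, ?_⟩
  rintro x - y - a b ha hb hab
  simp only [smul_eq_mul]
  rcases ha.eq_or_lt with rfl | ha'
  · have hb1 : b = 1 := by linarith
    subst hb1; simp
  rcases hb.eq_or_lt with rfl | hb'
  · have ha1 : a = 1 := by linarith
    subst ha1; simp
  -- main case : 0 < a, 0 < b
  set A := ∫ θ in Icc (-π) π, h θ * Real.exp (x * u θ) with hA
  set Bv := ∫ θ in Icc (-π) π, h θ * Real.exp (y * u θ) with hBv
  set Cv := ∫ θ in Icc (-π) π, h θ * Real.exp ((a * x + b * y) * u θ) with hCv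
  have hApos : 0 < A := hpos x
  have hBpos : 0 < Bv := hpos y
  have hCpos : 0 < Cv := hpos (a * x + b * y)
  -- Hölder
  set F : ℝ → ENNReal := fun θ => ENNReal.ofReal (h θ * Real.exp (x * u θ)) with hF
  set G : ℝ → ENNReal := fun θ => ENNReal.ofReal (h θ * Real.exp (y * u θ)) with hG
  have hFmeas : Measurable F := (hmeas x).ennreal_ofReal
  have hGmeas : Measurable G := (hmeas y).ennreal_ofReal
  have hpt : ∀ᵐ θ ∂μ, ENNReal.ofReal (h θ * Real.exp ((a * x + b * y) * u θ))
      = F θ ^ a * G θ ^ b := by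
    filter_upwards [hbd] with θ ⟨h1, _, _⟩
    have hhpos : 0 < h θ := hm.trans_le h1
    have e1 : (h θ * Real.exp (x * u θ)) ^ a = h θ ^ a * Real.exp (x * u θ * a) := by
      rw [Real.mul_rpow hhpos.le (Real.exp_pos _).le, ← Real.exp_mul]
    have e2 : (h θ * Real.exp (y * u θ)) ^ b = h θ ^ b * Real.exp (y * u θ * b) := by
      rw [Real.mul_rpow hhpos.le (Real.exp_pos _).le, ← Real.exp_mul]
    have ereal : h θ * Real.exp ((a * x + b * y) * u θ)
        = (h θ * Real.exp (x * u θ)) ^ a * (h θ * Real.exp (y * u θ)) ^ b := by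
      rw [e1, e2, show h θ ^ a * Real.exp (x * u θ * a) * (h θ ^ b * Real.exp (y * u θ * b))
          = (h θ ^ a * h θ ^ b) * (Real.exp (x * u θ * a) * Real.exp (y * u θ * b)) by ring,
        ← Real.exp_add, ← Real.rpow_add hhpos, hab, Real.rpow_one]
      congr 1
      ring
    rw [ereal, ENNReal.ofReal_mul (by positivity), ENNReal.ofReal_rpow_of_pos (by positivity),
      ENNReal.ofReal_rpow_of_pos (by positivity)]
  have hpq : Real.HolderConjugate a⁻¹ b⁻¹ := by
    rw [Real.holderConjugate_iff]
    constructor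
    · exact (one_lt_inv₀ ha').mpr (by linarith)
    · rw [inv_inv, inv_inv]; exact hab
  have holder := ENNReal.lintegral_mul_le_Lp_mul_Lq μ hpq
    (f := fun θ => F θ ^ a) (g := fun θ => G θ ^ b)
    (hFmeas.pow_const a).aemeasurable (hGmeas.pow_const b).aemeasurable
  have hFsimp : ∀ θ, (F θ ^ a) ^ (a⁻¹ : ℝ) = F θ :=
    fun θ => ENNReal.rpow_rpow_inv ha'.ne' _
  have hGsimp : ∀ θ, (G θ ^ b) ^ (b⁻¹ : ℝ) = G θ :=
    fun θ => ENNReal.rpow_rpow_inv hb'.ne' _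
  simp only [Pi.mul_apply, hFsimp, hGsimp, one_div, inv_inv] at holder
  -- convert lintegrals to integrals
  have hnn : ∀ τ : ℝ, 0 ≤ᵐ[μ] fun θ => h θ * Real.exp (τ * u θ) := by
    intro τ
    filter_upwards [hbd] with θ ⟨h1, _, _⟩
    have : 0 < h θ := hm.trans_le h1
    positivity
  have hAeq : ∫⁻ θ, F θ ∂μ = ENNReal.ofReal A :=
    (ofReal_integral_eq_lintegral_ofReal (hint x) (hnn x)).symm
  have hBeq : ∫⁻ θ, G θ ∂μ = ENNReal.ofReal Bv :=
    (ofReal_integral_eq_lintegral_ofReal (hint y) (hnn y)).symm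
  have hCeq : ∫⁻ θ, ENNReal.ofReal (h θ * Real.exp ((a * x + b * y) * u θ)) ∂μ
      = ENNReal.ofReal Cv :=
    (ofReal_integral_eq_lintegral_ofReal (hint _) (hnn _)).symm
  have key : Cv ≤ A ^ a * Bv ^ b := by
    have hchain : ENNReal.ofReal Cv ≤ ENNReal.ofReal (A ^ a * Bv ^ b) := by
      calc ENNReal.ofReal Cv
          = ∫⁻ θ, ENNReal.ofReal (h θ * Real.exp ((a * x + b * y) * u θ)) ∂μ := hCeq.symm
        _ = ∫⁻ θ, F θ ^ a * G θ ^ b ∂μ := lintegral_congr_ae hpt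
        _ ≤ (∫⁻ θ, F θ ∂μ) ^ a * (∫⁻ θ, G θ ∂μ) ^ b := holder
        _ = ENNReal.ofReal A ^ a * ENNReal.ofReal Bv ^ b := by rw [hAeq, hBeq]
        _ = ENNReal.ofReal (A ^ a * Bv ^ b) := by
            rw [ENNReal.ofReal_rpow_of_pos hApos, ENNReal.ofReal_rpow_of_pos hBpos,
              ← ENNReal.ofReal_mul (by positivity)]
    exact (ENNReal.ofReal_le_ofReal_iff (by positivity)).1 hchain
  -- conclude with log computations
  have hklog : Real.log ((2 * π)⁻¹ * Cv) ≤ Real.log ((2 * π)⁻¹ * (A ^ a * Bv ^ b)) := by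
    apply Real.log_le_log (by positivity)
    exact mul_le_mul_of_nonneg_left key (by positivity)
  calc Real.log ((2 * π)⁻¹ * Cv) ≤ Real.log ((2 * π)⁻¹ * (A ^ a * Bv ^ b)) := hklog
    _ = a * Real.log ((2 * π)⁻¹ * A) + b * Real.log ((2 * π)⁻¹ * Bv) := by
        rw [Real.log_mul (by positivity) (by positivity),
          Real.log_mul (by positivity) (by positivity),
          Real.log_mul (by positivity) (by positivity),
          Real.log_mul (by positivity) (by positivity),
          Real.log_rpow hApos, Real.log_rpow hBpos]
        linear_combination Real.log ((2 * π)⁻¹) * hab.symm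

/-- `τ ↦ δ(f1, f2^{1-τ} f3^{τ})` is convex on `[0, 1]`. -/
theorem deltaSym_convexOn (f1 f2 f3 : ℝ → ℝ) (c C : ℝ) (hc : 0 < c)
    (hm1 : Measurable f1) (hm2 : Measurable f2) (hm3 : Measurable f3)
    (hf1 : ∀ᵐ θ ∂(volume.restrict (Icc (-π) π)), c ≤ f1 θ ∧ f1 θ ≤ C)
    (hf2 : ∀ᵐ θ ∂(volume.restrict (Icc (-π) π)), c ≤ f2 θ ∧ f2 θ ≤ C)
    (hf3 : ∀ᵐ θ ∂(volume.restrict (Icc (-π) π)), c ≤ f3 θ ∧ f3 θ ≤ C) :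
    ConvexOn ℝ (Icc (0 : ℝ) 1)
      (fun τ => deltaSym f1 (fun θ => f2 θ ^ (1 - τ) * f3 θ ^ τ)) := by
  have hπ : (0:ℝ) < π := Real.pi_pos
  -- the measure is nontrivial, so c ≤ C
  have hμuniv : (volume.restrict (Icc (-π) π)) Set.univ ≠ 0 := by
    rw [mu_univ_eq, Ne, ENNReal.ofReal_eq_zero, not_le]
    positivity
  have hμne : volume.restrict (Icc (-π) π) ≠ 0 := by
    intro h0
    rw [h0] at hμuniv
    simp at hμuniv
  haveI : (MeasureTheory.ae (volume.restrict (Icc (-π) π))).NeBot := ae_neBot.mpr hμne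
  obtain ⟨θ0, hθ0⟩ := hf1.exists
  have hcC : c ≤ C := hθ0.1.trans hθ0.2
  have hCpos : (0:ℝ) < C := hc.trans_le hcC
  -- rewrite deltaSym in exponential form
  have key : ∀ τ : ℝ,
      deltaSym f1 (fun θ => f2 θ ^ (1 - τ) * f3 θ ^ τ) =
      Real.log ((2 * π)⁻¹ * ∫ θ in Icc (-π) π,
        (f1 θ / f2 θ) * Real.exp (τ * Real.log (f2 θ / f3 θ))) +
      Real.log ((2 * π)⁻¹ * ∫ θ in Icc (-π) π,
        (f2 θ / f1 θ) * Real.exp (τ * (- Real.log (f2 θ / f3 θ)))) := by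
    intro τ
    simp only [deltaSym, deltaAG]
    have hptneg : (fun θ => Real.log (f2 θ ^ (1 - τ) * f3 θ ^ τ / f1 θ))
        = fun θ => - Real.log (f1 θ / (f2 θ ^ (1 - τ) * f3 θ ^ τ)) :=
      funext fun θ => by rw [← Real.log_inv, inv_div]
    have hcancel : (∫ θ in Icc (-π) π, Real.log (f2 θ ^ (1 - τ) * f3 θ ^ τ / f1 θ))
        = - ∫ θ in Icc (-π) π, Real.log (f1 θ / (f2 θ ^ (1 - τ) * f3 θ ^ τ)) := by
      rw [hptneg, integral_neg]
    have hI1 : (∫ θ in Icc (-π) π, f1 θ / (f2 θ ^ (1 - τ) * f3 θ ^ τ))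
        = ∫ θ in Icc (-π) π, (f1 θ / f2 θ) * Real.exp (τ * Real.log (f2 θ / f3 θ)) := by
      refine integral_congr_ae ?_
      filter_upwards [hf1, hf2, hf3] with θ ⟨a1, _⟩ ⟨a2, _⟩ ⟨a3, _⟩
      have p1 : 0 < f1 θ := hc.trans_le a1
      have p2 : 0 < f2 θ := hc.trans_le a2
      have p3 : 0 < f3 θ := hc.trans_le a3
      rw [mul_comm τ, ← Real.rpow_def_of_pos (div_pos p2 p3),
        Real.div_rpow p2.le p3.le, Real.rpow_sub p2, Real.rpow_one]
      have h2τ : f2 θ ^ τ ≠ 0 := (Real.rpow_pos_of_pos p2 τ).ne'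
      have h3τ : f3 θ ^ τ ≠ 0 := (Real.rpow_pos_of_pos p3 τ).ne'
      field_simp
    have hI2 : (∫ θ in Icc (-π) π, f2 θ ^ (1 - τ) * f3 θ ^ τ / f1 θ)
        = ∫ θ in Icc (-π) π, (f2 θ / f1 θ) * Real.exp (τ * (- Real.log (f2 θ / f3 θ))) := by
      refine integral_congr_ae ?_
      filter_upwards [hf1, hf2, hf3] with θ ⟨a1, _⟩ ⟨a2, _⟩ ⟨a3, _⟩
      have p1 : 0 < f1 θ := hc.trans_le a1
      have p2 : 0 < f2 θ := hc.trans_le a2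
      have p3 : 0 < f3 θ := hc.trans_le a3
      rw [← Real.log_inv, inv_div, mul_comm τ, ← Real.rpow_def_of_pos (div_pos p3 p2),
        Real.div_rpow p3.le p2.le, Real.rpow_sub p2, Real.rpow_one]
      have h2τ : f2 θ ^ τ ≠ 0 := (Real.rpow_pos_of_pos p2 τ).ne'
      have h3τ : f3 θ ^ τ ≠ 0 := (Real.rpow_pos_of_pos p3 τ).ne'
      field_simp
    rw [hcancel, hI1, hI2]
    ring
  -- bounds for the auxiliary functions
  have hbd1 : ∀ᵐ θ ∂(volume.restrict (Icc (-π) π)),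
      c / C ≤ f1 θ / f2 θ ∧ f1 θ / f2 θ ≤ C / c ∧
        |Real.log (f2 θ / f3 θ)| ≤ Real.log (C / c) := by
    filter_upwards [hf1, hf2, hf3] with θ ⟨a1, b1⟩ ⟨a2, b2⟩ ⟨a3, b3⟩
    have p1 : 0 < f1 θ := hc.trans_le a1
    have p2 : 0 < f2 θ := hc.trans_le a2
    have p3 : 0 < f3 θ := hc.trans_le a3
    refine ⟨?_, ?_, ?_⟩
    · rw [div_le_div_iff₀ hCpos p2]; nlinarith
    · rw [div_le_div_iff₀ p2 hc]; nlinarith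
    · rw [abs_le]
      constructor
      · rw [← Real.log_inv, inv_div]
        apply Real.log_le_log (by positivity)
        rw [div_le_div_iff₀ hCpos p3]; nlinarith
      · apply Real.log_le_log (by positivity)
        rw [div_le_div_iff₀ p3 hc]; nlinarith
  have hbd2 : ∀ᵐ θ ∂(volume.restrict (Icc (-π) π)),
      c / C ≤ f2 θ / f1 θ ∧ f2 θ / f1 θ ≤ C / c ∧
        |(- Real.log (f2 θ / f3 θ))| ≤ Real.log (C / c) := by
    filter_upwards [hbd1, hf1, hf2, hf3] with θ ⟨_, _, h3⟩ ⟨a1, b1⟩ ⟨a2, b2⟩ ⟨a3, b3⟩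
    have p1 : 0 < f1 θ := hc.trans_le a1
    have p2 : 0 < f2 θ := hc.trans_le a2
    refine ⟨?_, ?_, ?_⟩
    · rw [div_le_div_iff₀ hCpos p1]; nlinarith
    · rw [div_le_div_iff₀ p1 hc]; nlinarith
    · rwa [abs_neg]
  have conv1 := convexOn_log_int (fun θ => f1 θ / f2 θ) (fun θ => Real.log (f2 θ / f3 θ))
    (hm1.div hm2) ((hm2.div hm3).log) (c / C) (C / c) (Real.log (C / c))
    (by positivity) hbd1
  have conv2 := convexOn_log_int (fun θ => f2 θ / f1 θ) (fun θ => - Real.log (f2 θ / f3 θ))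
    (hm2.div hm1) ((hm2.div hm3).log.neg) (c / C) (C / c) (Real.log (C / c))
    (by positivity) hbd2
  have conv := (conv1.add conv2).subset (subset_univ _) (convex_Icc 0 1)
  have heq : (fun τ => deltaSym f1 (fun θ => f2 θ ^ (1 - τ) * f3 θ ^ τ)) =
      ((fun τ => Real.log ((2 * π)⁻¹ * ∫ θ in Icc (-π) π,
        (f1 θ / f2 θ) * Real.exp (τ * Real.log (f2 θ / f3 θ)))) +
       (fun τ => Real.log ((2 * π)⁻¹ * ∫ θ in Icc (-π) π,
        (f2 θ / f1 θ) * Real.exp (τ * (- Real.log (f2 θ / f3 θ)))))) := by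
    funext τ
    exact key τ
  rw [heq]
  exact conv
end

section
/- Let f1, fb : [-π, π] → ℝ be measurable functions with 0 < c ≤ f1(θ), fb(θ) ≤ C almost everywhere for some constants c, C. Then the function τ ↦ δ(f1, f1^{1−τ} fb^{τ}) is monotonically increasing for τ ∈ [0, 1]. -/
open MeasureTheory Real Set

section Aux

variable {μ : Measure ℝ} [IsFiniteMeasure μ] {h : ℝ → ℝ} {m M : ℝ}

private lemma rpow_le_expK {x a : ℝ} (hm : 0 < m) (h1 : m ≤ x) (h2 : x ≤ M) :
    x ^ a ≤ Real.exp (|a| * max |Real.log m| |Real.log M|) := by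
  have hx : 0 < x := lt_of_lt_of_le hm h1
  rw [Real.rpow_def_of_pos hx]
  refine Real.exp_le_exp.mpr ?_
  calc Real.log x * a ≤ |Real.log x * a| := le_abs_self _
    _ = |a| * |Real.log x| := by rw [abs_mul]; ring
    _ ≤ |a| * max |Real.log m| |Real.log M| := by
        gcongr
        exact abs_le_max_abs_abs (Real.log_le_log hm h1) (Real.log_le_log hx h2)

private lemma expK_le_rpow {x a : ℝ} (hm : 0 < m) (h1 : m ≤ x) (h2 : x ≤ M) :
    Real.exp (-(|a| * max |Real.log m| |Real.log M|)) ≤ x ^ a := by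
  have hx : 0 < x := lt_of_lt_of_le hm h1
  rw [Real.rpow_def_of_pos hx]
  refine Real.exp_le_exp.mpr ?_
  rw [neg_le]
  calc -(Real.log x * a) ≤ |Real.log x * a| := neg_le_abs _
    _ = |a| * |Real.log x| := by rw [abs_mul]; ring
    _ ≤ |a| * max |Real.log m| |Real.log M| := by
        gcongr
        exact abs_le_max_abs_abs (Real.log_le_log hm h1) (Real.log_le_log hx h2)

private lemma integrable_rpow_aux (hmeas : Measurable h) (hm : 0 < m)
    (hb : ∀ᵐ θ ∂μ, m ≤ h θ ∧ h θ ≤ M) (a : ℝ) :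
    Integrable (fun θ => h θ ^ a) μ := by
  refine Integrable.mono' (integrable_const
      (Real.exp (|a| * max |Real.log m| |Real.log M|)))
    ((hmeas.pow measurable_const).aestronglyMeasurable) ?_
  filter_upwards [hb] with θ hθ
  rw [Real.norm_eq_abs, abs_of_pos (Real.rpow_pos_of_pos (lt_of_lt_of_le hm hθ.1) a)]
  exact rpow_le_expK hm hθ.1 hθ.2

private lemma integral_rpow_pos_aux (hmeas : Measurable h) (hm : 0 < m)
    (hb : ∀ᵐ θ ∂μ, m ≤ h θ ∧ h θ ≤ M) (hμ : 0 < (μ Set.univ).toReal) (a : ℝ) :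
    0 < ∫ θ, h θ ^ a ∂μ := by
  have h1 : ∫ _θ, Real.exp (-(|a| * max |Real.log m| |Real.log M|)) ∂μ
      ≤ ∫ θ, h θ ^ a ∂μ := by
    refine integral_mono_ae (integrable_const _) (integrable_rpow_aux hmeas hm hb a) ?_
    filter_upwards [hb] with θ hθ
    exact expK_le_rpow hm hθ.1 hθ.2
  refine lt_of_lt_of_le ?_ h1
  rw [integral_const]
  positivity

/-- Hölder inequality / log-convexity step. -/
private lemma holder_aux (hmeas : Measurable h) (hm : 0 < m)
    (hb : ∀ᵐ θ ∂μ, m ≤ h θ ∧ h θ ≤ M) (s t lam : ℝ) (h0 : 0 < lam) (h1 : lam < 1) :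
    ∫ θ, h θ ^ (lam * s + (1 - lam) * t) ∂μ
      ≤ (∫ θ, h θ ^ s ∂μ) ^ lam * (∫ θ, h θ ^ t ∂μ) ^ (1 - lam) := by
  set p := lam⁻¹ with hp
  set q := (1 - lam)⁻¹ with hq
  have h1l : 0 < 1 - lam := by linarith
  have hpq : p.HolderConjugate q := by
    rw [Real.holderConjugate_iff]; constructor
    · exact one_lt_inv₀ h0 |>.mpr h1
    · rw [hp, hq, inv_inv, inv_inv]; ring
  have hmemf : MemLp (fun θ => h θ ^ (lam * s)) (ENNReal.ofReal p) μ := by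
    refine MemLp.of_bound ((hmeas.pow measurable_const).aestronglyMeasurable)
      (Real.exp (|lam * s| * max |Real.log m| |Real.log M|)) ?_
    filter_upwards [hb] with θ hθ
    rw [Real.norm_eq_abs, abs_of_pos (Real.rpow_pos_of_pos (lt_of_lt_of_le hm hθ.1) _)]
    exact rpow_le_expK hm hθ.1 hθ.2
  have hmemg : MemLp (fun θ => h θ ^ ((1 - lam) * t)) (ENNReal.ofReal q) μ := by
    refine MemLp.of_bound ((hmeas.pow measurable_const).aestronglyMeasurable)
      (Real.exp (|(1 - lam) * t| * max |Real.log m| |Real.log M|)) ?_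
    filter_upwards [hb] with θ hθ
    rw [Real.norm_eq_abs, abs_of_pos (Real.rpow_pos_of_pos (lt_of_lt_of_le hm hθ.1) _)]
    exact rpow_le_expK hm hθ.1 hθ.2
  have hf_nonneg : 0 ≤ᵐ[μ] fun θ => h θ ^ (lam * s) := by
    filter_upwards [hb] with θ hθ
    exact (Real.rpow_pos_of_pos (lt_of_lt_of_le hm hθ.1) _).le
  have hg_nonneg : 0 ≤ᵐ[μ] fun θ => h θ ^ ((1 - lam) * t) := by
    filter_upwards [hb] with θ hθ
    exact (Real.rpow_pos_of_pos (lt_of_lt_of_le hm hθ.1) _).le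
  have H := integral_mul_le_Lp_mul_Lq_of_nonneg hpq hf_nonneg hg_nonneg hmemf hmemg
  have e0 : ∫ θ, h θ ^ (lam * s) * h θ ^ ((1 - lam) * t) ∂μ
      = ∫ θ, h θ ^ (lam * s + (1 - lam) * t) ∂μ := by
    refine integral_congr_ae ?_
    filter_upwards [hb] with θ hθ
    rw [← Real.rpow_add (lt_of_lt_of_le hm hθ.1)]
  have e1 : ∫ θ, (h θ ^ (lam * s)) ^ p ∂μ = ∫ θ, h θ ^ s ∂μ := by
    refine integral_congr_ae ?_
    filter_upwards [hb] with θ hθ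
    rw [← Real.rpow_mul (lt_of_lt_of_le hm hθ.1).le]
    rw [hp]
    congr 1
    rw [mul_comm lam s, mul_assoc, mul_inv_cancel₀ h0.ne', mul_one]
  have e2 : ∫ θ, (h θ ^ ((1 - lam) * t)) ^ q ∂μ = ∫ θ, h θ ^ t ∂μ := by
    refine integral_congr_ae ?_
    filter_upwards [hb] with θ hθ
    rw [← Real.rpow_mul (lt_of_lt_of_le hm hθ.1).le, hq]
    congr 1
    rw [mul_comm (1-lam) t, mul_assoc, mul_inv_cancel₀ h1l.ne', mul_one]
  have hip : 1 / p = lam := by rw [hp, one_div, inv_inv]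
  have hiq : 1 / q = 1 - lam := by rw [hq, one_div, inv_inv]
  rw [e0, e1, e2, hip, hiq] at H
  exact H


private lemma prod_aux (hmeas : Measurable h) (hm : 0 < m)
    (hb : ∀ᵐ θ ∂μ, m ≤ h θ ∧ h θ ≤ M) (hμ : 0 < (μ Set.univ).toReal)
    {a b : ℝ} (h0a : 0 ≤ a) (hab : a < b) :
    (∫ θ, h θ ^ a ∂μ) * (∫ θ, h θ ^ (-a) ∂μ)
      ≤ (∫ θ, h θ ^ b ∂μ) * (∫ θ, h θ ^ (-b) ∂μ) := by
  have hbpos : 0 < b := lt_of_le_of_lt h0a hab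
  set lam := (a + b) / (2 * b) with hlam
  have hl0 : 0 < lam := div_pos (by linarith) (by linarith)
  have hl1 : lam < 1 := by
    rw [hlam, div_lt_one (by linarith)]; linarith
  have ea : lam * b + (1 - lam) * (-b) = a := by
    rw [hlam]; field_simp; ring
  have ema : lam * (-b) + (1 - lam) * b = -a := by
    rw [hlam]; field_simp; ring
  have H1 := holder_aux hmeas hm hb b (-b) lam hl0 hl1
  rw [ea] at H1
  have H2 := holder_aux hmeas hm hb (-b) b lam hl0 hl1
  rw [ema] at H2
  have pb := integral_rpow_pos_aux hmeas hm hb hμ b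
  have pmb := integral_rpow_pos_aux hmeas hm hb hμ (-b)
  have pa := integral_rpow_pos_aux hmeas hm hb hμ a
  have pma := integral_rpow_pos_aux hmeas hm hb hμ (-a)
  calc (∫ θ, h θ ^ a ∂μ) * (∫ θ, h θ ^ (-a) ∂μ)
      ≤ ((∫ θ, h θ ^ b ∂μ) ^ lam * (∫ θ, h θ ^ (-b) ∂μ) ^ (1 - lam))
        * ((∫ θ, h θ ^ (-b) ∂μ) ^ lam * (∫ θ, h θ ^ b ∂μ) ^ (1 - lam)) := by
        refine mul_le_mul H1 H2 pma.le ?_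
        positivity
    _ = (∫ θ, h θ ^ b ∂μ) * (∫ θ, h θ ^ (-b) ∂μ) := by
        rw [show ((∫ θ, h θ ^ b ∂μ) ^ lam * (∫ θ, h θ ^ (-b) ∂μ) ^ (1 - lam))
            * ((∫ θ, h θ ^ (-b) ∂μ) ^ lam * (∫ θ, h θ ^ b ∂μ) ^ (1 - lam))
            = ((∫ θ, h θ ^ b ∂μ) ^ lam * (∫ θ, h θ ^ b ∂μ) ^ (1 - lam))
            * ((∫ θ, h θ ^ (-b) ∂μ) ^ lam * (∫ θ, h θ ^ (-b) ∂μ) ^ (1 - lam)) by ring,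
          ← Real.rpow_add pb, ← Real.rpow_add pmb]
        norm_num

end Aux

/-- `τ ↦ δ(f1, f1^{1-τ} fb^{τ})` is monotonically increasing on `[0, 1]`. -/
theorem deltaSym_monotoneOn (f1 fb : ℝ → ℝ) (c C : ℝ) (hc : 0 < c)
    (hm1 : Measurable f1) (hmb : Measurable fb)
    (hf1 : ∀ᵐ θ ∂(volume.restrict (Icc (-π) π)), c ≤ f1 θ ∧ f1 θ ≤ C)
    (hfb : ∀ᵐ θ ∂(volume.restrict (Icc (-π) π)), c ≤ fb θ ∧ fb θ ≤ C) :
    MonotoneOn (fun τ => deltaSym f1 (fun θ => f1 θ ^ (1 - τ) * fb θ ^ τ))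
      (Icc (0 : ℝ) 1) := by
  have hπ : (0:ℝ) < 2 * π := by positivity
  have hvol : volume (Icc (-π) π) = ENNReal.ofReal (2 * π) := by
    rw [Real.volume_Icc, show π - -π = 2 * π by ring]
  haveI hfin : IsFiniteMeasure (volume.restrict (Icc (-π) π)) :=
    ⟨by rw [Measure.restrict_apply_univ, hvol]; exact ENNReal.ofReal_lt_top⟩
  have hμpos : 0 < ((volume.restrict (Icc (-π) π)) Set.univ).toReal := by
    rw [Measure.restrict_apply_univ, hvol, ENNReal.toReal_ofReal hπ.le]; exact hπ
  haveI hneb : (ae (volume.restrict (Icc (-π) π))).NeBot := by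
    refine ae_neBot.mpr fun h0 => ?_
    rw [h0] at hμpos; simp at hμpos
  obtain ⟨θ₀, hθ₀⟩ := hf1.exists
  have hC : 0 < C := lt_of_lt_of_le hc (le_trans hθ₀.1 hθ₀.2)
  set h : ℝ → ℝ := fun θ => f1 θ / fb θ with hh
  have hmeas : Measurable h := hm1.div hmb
  have hm0 : 0 < c / C := div_pos hc hC
  have hbnd : ∀ᵐ θ ∂(volume.restrict (Icc (-π) π)), c / C ≤ h θ ∧ h θ ≤ C / c := by
    filter_upwards [hf1, hfb] with θ h1 h2
    have hf1p : 0 < f1 θ := lt_of_lt_of_le hc h1.1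
    have hfbp : 0 < fb θ := lt_of_lt_of_le hc h2.1
    exact ⟨div_le_div₀ hf1p.le h1.1 hfbp h2.2, div_le_div₀ hC.le h1.2 hc h2.1⟩
  have key : ∀ τ : ℝ, deltaSym f1 (fun θ => f1 θ ^ (1 - τ) * fb θ ^ τ)
      = Real.log ((2 * π)⁻¹ * ∫ θ in Icc (-π) π, h θ ^ τ)
        + Real.log ((2 * π)⁻¹ * ∫ θ in Icc (-π) π, h θ ^ (-τ)) := by
    intro τ
    have hpt : ∀ᵐ θ ∂(volume.restrict (Icc (-π) π)),
        (f1 θ / (f1 θ ^ (1 - τ) * fb θ ^ τ) = h θ ^ τ)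
        ∧ ((f1 θ ^ (1 - τ) * fb θ ^ τ) / f1 θ = h θ ^ (-τ)) := by
      filter_upwards [hf1, hfb] with θ h1 h2
      have hx : 0 < f1 θ := lt_of_lt_of_le hc h1.1
      have hy : 0 < fb θ := lt_of_lt_of_le hc h2.1
      have hp1 : f1 θ / (f1 θ ^ (1 - τ) * fb θ ^ τ) = h θ ^ τ := by
        have hxx : f1 θ ^ (1 - τ) * f1 θ ^ τ = f1 θ := by
          rw [← Real.rpow_add hx, show (1 - τ) + τ = (1:ℝ) by ring, Real.rpow_one]
        calc f1 θ / (f1 θ ^ (1 - τ) * fb θ ^ τ)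
            = (f1 θ ^ (1 - τ) * f1 θ ^ τ) / (f1 θ ^ (1 - τ) * fb θ ^ τ) := by rw [hxx]
          _ = f1 θ ^ τ / fb θ ^ τ :=
              mul_div_mul_left _ _ (ne_of_gt (Real.rpow_pos_of_pos hx _))
          _ = h θ ^ τ := (Real.div_rpow hx.le hy.le τ).symm
      refine ⟨hp1, ?_⟩
      rw [Real.rpow_neg (div_nonneg hx.le hy.le), ← hp1, inv_div]
    have e1 : ∫ θ in Icc (-π) π, f1 θ / (f1 θ ^ (1 - τ) * fb θ ^ τ)
        = ∫ θ in Icc (-π) π, h θ ^ τ := by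
      refine integral_congr_ae ?_
      filter_upwards [hpt] with θ hθ using hθ.1
    have e2 : ∫ θ in Icc (-π) π, (f1 θ ^ (1 - τ) * fb θ ^ τ) / f1 θ
        = ∫ θ in Icc (-π) π, h θ ^ (-τ) := by
      refine integral_congr_ae ?_
      filter_upwards [hpt] with θ hθ using hθ.2
    have e3 : ∫ θ in Icc (-π) π, Real.log (f1 θ / (f1 θ ^ (1 - τ) * fb θ ^ τ))
        = τ * ∫ θ in Icc (-π) π, Real.log (h θ) := by
      rw [← integral_const_mul τ _]
      refine integral_congr_ae ?_
      filter_upwards [hpt, hbnd] with θ hθ hbθ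
      rw [hθ.1, Real.log_rpow (lt_of_lt_of_le hm0 hbθ.1)]
    have e4 : ∫ θ in Icc (-π) π, Real.log ((f1 θ ^ (1 - τ) * fb θ ^ τ) / f1 θ)
        = -(τ * ∫ θ in Icc (-π) π, Real.log (h θ)) := by
      rw [← integral_const_mul τ _, ← integral_neg]
      refine integral_congr_ae ?_
      filter_upwards [hpt, hbnd] with θ hθ hbθ
      rw [hθ.2, Real.log_rpow (lt_of_lt_of_le hm0 hbθ.1)]
      ring
    simp only [deltaSym, deltaAG]
    rw [e1, e2, e3, e4]
    ring
  intro a ha b hb hab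
  rcases eq_or_lt_of_le hab with rfl | hlt
  · exact le_refl _
  simp only []
  rw [key a, key b]
  have pa := integral_rpow_pos_aux hmeas hm0 hbnd hμpos a
  have pma := integral_rpow_pos_aux hmeas hm0 hbnd hμpos (-a)
  have pb := integral_rpow_pos_aux hmeas hm0 hbnd hμpos b
  have pmb := integral_rpow_pos_aux hmeas hm0 hbnd hμpos (-b)
  have prod := prod_aux hmeas hm0 hbnd hμpos ha.1 hlt
  have g1 : 0 < (2 * π)⁻¹ * ∫ θ in Icc (-π) π, h θ ^ a := by positivity
  have g2 : 0 < (2 * π)⁻¹ * ∫ θ in Icc (-π) π, h θ ^ (-a) := by positivity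
  have g3 : 0 < (2 * π)⁻¹ * ∫ θ in Icc (-π) π, h θ ^ b := by positivity
  have g4 : 0 < (2 * π)⁻¹ * ∫ θ in Icc (-π) π, h θ ^ (-b) := by positivity
  rw [← Real.log_mul g1.ne' g2.ne', ← Real.log_mul g3.ne' g4.ne']
  refine Real.log_le_log (by positivity) ?_
  calc ((2 * π)⁻¹ * ∫ θ in Icc (-π) π, h θ ^ a) * ((2 * π)⁻¹ * ∫ θ in Icc (-π) π, h θ ^ (-a))
      = (2 * π)⁻¹ * (2 * π)⁻¹
        * ((∫ θ in Icc (-π) π, h θ ^ a) * ∫ θ in Icc (-π) π, h θ ^ (-a)) := by ring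
    _ ≤ (2 * π)⁻¹ * (2 * π)⁻¹
        * ((∫ θ in Icc (-π) π, h θ ^ b) * ∫ θ in Icc (-π) π, h θ ^ (-b)) := by
        refine mul_le_mul_of_nonneg_left prod (by positivity)
    _ = ((2 * π)⁻¹ * ∫ θ in Icc (-π) π, h θ ^ b)
        * ((2 * π)⁻¹ * ∫ θ in Icc (-π) π, h θ ^ (-b)) := by ring
end

section
/- Let f, Δ : [-π, π] → ℝ be measurable with 0 < c ≤ f(θ) ≤ C and |Δ(θ)| ≤ C almost everywhere for some constants c, C. Set Q := (1/2π)∫_{-π}^{π} (Δ(θ)/f(θ))² dθ − ((1/2π)∫_{-π}^{π} Δ(θ)/f(θ) dθ)². Then there exist constants K > 0 and t0 > 0 such that for all real t with |t| ≤ t0 one has |δ(f, f + tΔ) − t²·Q| ≤ K·|t|³; that is, δ(f, f + tΔ) = t²·Q + O(|t|³) as t → 0. -/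
set_option maxHeartbeats 1000000


open MeasureTheory Real Set

/-- The log-integral parts of `deltaSym` cancel exactly. -/
theorem deltaSym_eq_log_add_log (f1 f2 : ℝ → ℝ) :
    deltaSym f1 f2 =
      Real.log ((2 * π)⁻¹ * ∫ θ in Icc (-π) π, f1 θ / f2 θ) +
        Real.log ((2 * π)⁻¹ * ∫ θ in Icc (-π) π, f2 θ / f1 θ) := by
  unfold deltaSym deltaAG
  have h : ∀ θ, Real.log (f2 θ / f1 θ) = - Real.log (f1 θ / f2 θ) := fun θ => by
    rw [← Real.log_inv, inv_div]
  simp_rw [h]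
  rw [integral_neg]
  ring

/-- `log(1+u)` is within `2u²` of `u` when `u ≥ -1/4`. -/
theorem abs_log_one_add_sub_le (u : ℝ) (hu : -(1/4 : ℝ) ≤ u) :
    |Real.log (1 + u) - u| ≤ 2 * u ^ 2 := by
  have hw : (0:ℝ) < 1 + u := by linarith
  have h1 : Real.log (1 + u) ≤ u := by
    have := Real.log_le_sub_one_of_pos hw
    linarith
  have h2 : u - 2 * u ^ 2 ≤ Real.log (1 + u) := by
    have hinvpos : (0:ℝ) < (1 + u)⁻¹ := inv_pos.2 hw
    have hinv : (1 + u) * (1 + u)⁻¹ = 1 := mul_inv_cancel₀ hw.ne'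
    have hlog := Real.log_le_sub_one_of_pos hinvpos
    rw [Real.log_inv] at hlog
    have hge : 1 - (1 + u)⁻¹ ≤ Real.log (1 + u) := by linarith
    have hkey : u - 2 * u ^ 2 ≤ 1 - (1 + u)⁻¹ := by
      nlinarith [sq_nonneg u, hinvpos]
    linarith
  rw [abs_le]
  constructor <;> nlinarith [sq_nonneg u]

/-- Second-order expansion of the symmetrized distance:
`δ(f, f + tΔ) = t²·Q + O(|t|³)` as `t → 0`, where
`Q = (1/2π)∫ (Δ/f)² dθ − ((1/2π)∫ Δ/f dθ)²`. -/
theorem deltaSym_quadratic_expansion (f Δ : ℝ → ℝ) (c C : ℝ) (hc : 0 < c)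
    (hmf : Measurable f) (hmΔ : Measurable Δ)
    (hf : ∀ᵐ θ ∂(volume.restrict (Icc (-π) π)), c ≤ f θ ∧ f θ ≤ C)
    (hΔ : ∀ᵐ θ ∂(volume.restrict (Icc (-π) π)), |Δ θ| ≤ C) :
    ∃ K > (0 : ℝ), ∃ t0 > (0 : ℝ), ∀ t : ℝ, |t| ≤ t0 →
      |deltaSym f (fun θ => f θ + t * Δ θ) -
          t ^ 2 * (((2 * π)⁻¹ * ∫ θ in Icc (-π) π, (Δ θ / f θ) ^ 2) -
            ((2 * π)⁻¹ * ∫ θ in Icc (-π) π, Δ θ / f θ) ^ 2)| ≤ K * |t| ^ 3 := by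
  have hπ : (0:ℝ) < π := Real.pi_pos
  set μ : Measure ℝ := volume.restrict (Icc (-π) π) with hμdef
  have h2π : (0:ℝ) < 2 * π := by positivity
  have hvol : μ Set.univ = ENNReal.ofReal (2 * π) := by
    rw [hμdef, Measure.restrict_apply_univ, Real.volume_Icc]
    ring_nf
  haveI : IsFiniteMeasure μ := ⟨by rw [hvol]; exact ENNReal.ofReal_lt_top⟩
  have hμreal : μ.real Set.univ = 2 * π := by
    rw [measureReal_def, hvol, ENNReal.toReal_ofReal (by positivity)]
  have hμne : μ ≠ 0 := by
    intro h
    rw [h, Measure.coe_zero, Pi.zero_apply] at hvol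
    exact absurd hvol.symm (ne_of_gt (ENNReal.ofReal_pos.2 h2π))
  haveI : (ae μ).NeBot := ae_neBot.2 hμne
  obtain ⟨θ₀, hθ₀⟩ := (hΔ.and hf).exists
  have hC0 : 0 ≤ C := le_trans (abs_nonneg _) hθ₀.1
  set M : ℝ := max (C / c) 1 with hMdef
  have hM1 : (1:ℝ) ≤ M := le_max_right _ _
  have hM0 : (0:ℝ) < M := lt_of_lt_of_le one_pos hM1
  set g : ℝ → ℝ := fun θ => Δ θ / f θ with hgdef
  have hgm : Measurable g := hmΔ.div hmf
  have hgb : ∀ᵐ θ ∂μ, |g θ| ≤ M := by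
    filter_upwards [hf, hΔ] with θ h1 h3
    have hfpos : 0 < f θ := lt_of_lt_of_le hc h1.1
    have habs : |g θ| = |Δ θ| / f θ := by
      rw [hgdef, abs_div, abs_of_pos hfpos]
    rw [habs]
    exact le_trans (div_le_div₀ hC0 h3 hc h1.1) (le_max_left _ _)
  -- integrability helper
  have key : ∀ (h : ℝ → ℝ) (B : ℝ), Measurable h → (∀ᵐ θ ∂μ, |h θ| ≤ B) →
      Integrable h μ := by
    intro h B hm hb
    exact Integrable.mono' (integrable_const B) hm.aestronglyMeasurable
      (by filter_upwards [hb] with θ hθ using by simpa [Real.norm_eq_abs] using hθ)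
  have hig : Integrable g μ := key g M hgm hgb
  have hgb2 : ∀ᵐ θ ∂μ, |g θ ^ 2| ≤ M ^ 2 := by
    filter_upwards [hgb] with θ hθ
    rw [abs_pow]
    exact pow_le_pow_left₀ (abs_nonneg _) hθ 2
  have hig2 : Integrable (fun θ => g θ ^ 2) μ := key _ (M ^ 2) (hgm.pow_const 2) hgb2
  -- the mean quantities
  set Ig : ℝ := ∫ θ in Icc (-π) π, Δ θ / f θ with hIgdef
  set Ig2 : ℝ := ∫ θ in Icc (-π) π, (Δ θ / f θ) ^ 2 with hIg2def
  have hIg_eq : Ig = ∫ θ, g θ ∂μ := rfl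
  have hIg2_eq : Ig2 = ∫ θ, g θ ^ 2 ∂μ := rfl
  set m : ℝ := (2 * π)⁻¹ * Ig with hmdef
  set s : ℝ := (2 * π)⁻¹ * Ig2 with hsdef
  have hinv2π : (0:ℝ) < (2 * π)⁻¹ := inv_pos.2 h2π
  have hIg_bound : |Ig| ≤ M * (2 * π) := by
    rw [hIg_eq]
    have := norm_integral_le_of_norm_le_const (μ := μ) (f := g) (C := M)
      (by filter_upwards [hgb] with θ hθ using by simpa [Real.norm_eq_abs] using hθ)
    rwa [Real.norm_eq_abs, hμreal] at this
  have hIg2_bound : |Ig2| ≤ M ^ 2 * (2 * π) := by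
    rw [hIg2_eq]
    have := norm_integral_le_of_norm_le_const (μ := μ) (f := fun θ => g θ ^ 2) (C := M ^ 2)
      (by filter_upwards [hgb2] with θ hθ using by simpa [Real.norm_eq_abs] using hθ)
    rwa [Real.norm_eq_abs, hμreal] at this
  have hm_bound : |m| ≤ M := by
    rw [hmdef, abs_mul, abs_of_pos hinv2π]
    calc (2 * π)⁻¹ * |Ig| ≤ (2 * π)⁻¹ * (M * (2 * π)) :=
          mul_le_mul_of_nonneg_left hIg_bound hinv2π.le
      _ = M := by field_simp
  have hs_bound : |s| ≤ M ^ 2 := by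
    rw [hsdef, abs_mul, abs_of_pos hinv2π]
    calc (2 * π)⁻¹ * |Ig2| ≤ (2 * π)⁻¹ * (M ^ 2 * (2 * π)) :=
          mul_le_mul_of_nonneg_left hIg2_bound hinv2π.le
      _ = M ^ 2 := by field_simp
  refine ⟨16 * M ^ 3, by positivity, (4 * M)⁻¹, by positivity, fun t ht => ?_⟩
  set T : ℝ := |t| with hTdef
  have hT0 : 0 ≤ T := abs_nonneg t
  have hT2 : t ^ 2 = T ^ 2 := (sq_abs t).symm
  have h4MT : 4 * M * T ≤ 1 := by
    have h4M : (0:ℝ) < 4 * M := by positivity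
    have := mul_le_mul_of_nonneg_left ht h4M.le
    rwa [mul_inv_cancel₀ h4M.ne'] at this
  have htM : T * M ≤ 1 / 4 := by nlinarith
  have htg : ∀ᵐ θ ∂μ, |t * g θ| ≤ 1 / 4 := by
    filter_upwards [hgb] with θ hθ
    rw [abs_mul]
    calc |t| * |g θ| ≤ |t| * M := mul_le_mul_of_nonneg_left hθ (abs_nonneg _)
      _ ≤ 1 / 4 := by rw [← hTdef]; linarith [htM]
  have h1tg : ∀ᵐ θ ∂μ, 3/4 ≤ 1 + t * g θ ∧ 1 + t * g θ ≤ 5/4 := by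
    filter_upwards [htg] with θ hθ
    rw [abs_le] at hθ
    constructor <;> linarith [hθ.1, hθ.2]
  -- integrability of the inverse
  have hinvmeas : Measurable fun θ => (1 + t * g θ)⁻¹ :=
    (measurable_const.add (measurable_const.mul hgm)).inv
  have hinvb : ∀ᵐ θ ∂μ, |(1 + t * g θ)⁻¹| ≤ 2 := by
    filter_upwards [h1tg] with θ hθ
    have hpos : (0:ℝ) < 1 + t * g θ := by linarith [hθ.1]
    rw [abs_of_pos (inv_pos.2 hpos)]
    calc (1 + t * g θ)⁻¹ ≤ (3/4 : ℝ)⁻¹ := inv_anti₀ (by norm_num) hθ.1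
      _ ≤ 2 := by norm_num
  have hinvint : Integrable (fun θ => (1 + t * g θ)⁻¹) μ := key _ 2 hinvmeas hinvb
  have hsubint : Integrable (fun θ => 1 - t * g θ) μ :=
    (integrable_const 1).sub (hig.const_mul t)
  have hmulint : Integrable (fun θ => t ^ 2 * g θ ^ 2) μ := hig2.const_mul (t ^ 2)
  have hpolyint : Integrable (fun θ => 1 - t * g θ + t ^ 2 * g θ ^ 2) μ := hsubint.add hmulint
  have hpolyeq : (∫ θ, (1 - t * g θ + t ^ 2 * g θ ^ 2) ∂μ) = 2 * π - t * Ig + t ^ 2 * Ig2 := by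
    rw [integral_add hsubint hmulint,
      integral_sub (integrable_const 1) (hig.const_mul t), integral_const, smul_eq_mul,
      hμreal, integral_const_mul, integral_const_mul, hIg_eq, hIg2_eq]
    ring
  set I1 : ℝ := ∫ θ, (1 + t * g θ)⁻¹ ∂μ with hI1def
  set A₁ : ℝ := (2 * π)⁻¹ * I1 with hA₁def
  set A₂ : ℝ := 1 + t * m with hA₂def
  -- Taylor error of the inverse integral
  have hI1err : |I1 - (2 * π - t * Ig + t ^ 2 * Ig2)| ≤ (4/3) * M ^ 3 * T ^ 3 * (2 * π) := by
    have heq : I1 - (2 * π - t * Ig + t ^ 2 * Ig2) =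
        ∫ θ, ((1 + t * g θ)⁻¹ - (1 - t * g θ + t ^ 2 * g θ ^ 2)) ∂μ := by
      rw [integral_sub hinvint hpolyint, hpolyeq]
    rw [heq]
    have hbd : ∀ᵐ θ ∂μ, ‖(1 + t * g θ)⁻¹ - (1 - t * g θ + t ^ 2 * g θ ^ 2)‖ ≤
        (4/3) * M ^ 3 * T ^ 3 := by
      filter_upwards [h1tg, hgb] with θ h1 h2
      set x : ℝ := t * g θ with hxdef
      have hwpos : (0:ℝ) < 1 + x := by linarith [h1.1]
      have hxabs : |x| ≤ T * M := by
        rw [hxdef, abs_mul, ← hTdef]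
        exact mul_le_mul_of_nonneg_left h2 hT0
      have hident : (1 + x)⁻¹ - (1 - x + x ^ 2) = -(x ^ 3) * (1 + x)⁻¹ := by
        field_simp
        ring
      have htx : 1 - x + x ^ 2 = 1 - t * g θ + t ^ 2 * g θ ^ 2 := by
        rw [hxdef]; ring
      rw [Real.norm_eq_abs, ← htx, hident, abs_mul, abs_neg, abs_pow]
      have hinvle : (1 + x)⁻¹ ≤ 4/3 := by
        calc (1 + x)⁻¹ ≤ (3/4 : ℝ)⁻¹ := inv_anti₀ (by norm_num) h1.1
          _ = 4/3 := by norm_num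
      have hinvabs : |(1 + x)⁻¹| = (1 + x)⁻¹ := abs_of_pos (inv_pos.2 hwpos)
      calc |x| ^ 3 * |(1 + x)⁻¹| ≤ (T * M) ^ 3 * (4/3) := by
            rw [hinvabs]
            exact mul_le_mul (pow_le_pow_left₀ (abs_nonneg _) hxabs 3) hinvle
              (inv_pos.2 hwpos).le (by positivity)
        _ = (4/3) * M ^ 3 * T ^ 3 := by ring
    have := norm_integral_le_of_norm_le_const (μ := μ) (C := (4/3) * M ^ 3 * T ^ 3) hbd
    rwa [Real.norm_eq_abs, hμreal] at this
  have he : |A₁ - (1 - t * m + t ^ 2 * s)| ≤ 2 * M ^ 3 * T ^ 3 := by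
    have heq : A₁ - (1 - t * m + t ^ 2 * s) =
        (2 * π)⁻¹ * (I1 - (2 * π - t * Ig + t ^ 2 * Ig2)) := by
      rw [hA₁def, hmdef, hsdef]
      field_simp
    rw [heq, abs_mul, abs_of_pos hinv2π]
    calc (2 * π)⁻¹ * |I1 - (2 * π - t * Ig + t ^ 2 * Ig2)|
        ≤ (2 * π)⁻¹ * ((4/3) * M ^ 3 * T ^ 3 * (2 * π)) :=
          mul_le_mul_of_nonneg_left hI1err hinv2π.le
      _ = (4/3) * M ^ 3 * T ^ 3 := by field_simp
      _ ≤ 2 * M ^ 3 * T ^ 3 := by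
          have h0 : 0 ≤ M ^ 3 * T ^ 3 := mul_nonneg (pow_pos hM0 3).le (pow_nonneg hT0 3)
          linarith
  -- A₂ is the mean of 1 + t*g
  have hA₂eq : (2 * π)⁻¹ * (∫ θ, (1 + t * g θ) ∂μ) = A₂ := by
    have h1 : (∫ θ, (1 + t * g θ) ∂μ) = 2 * π + t * Ig := by
      rw [integral_add (integrable_const 1) (hig.const_mul t), integral_const, smul_eq_mul,
        hμreal, integral_const_mul, hIg_eq]
      ring
    rw [h1, hA₂def, hmdef]
    field_simp
  -- positivity of A₁ and A₂
  have hA₁pos : (4/5 : ℝ) ≤ A₁ := by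
    have hconst : (∫ _θ, (4/5 : ℝ) ∂μ) = (4/5) * (2 * π) := by
      rw [integral_const, smul_eq_mul, hμreal]
      ring
    have hmono : (4/5) * (2 * π) ≤ I1 := by
      rw [← hconst]
      refine integral_mono_ae (integrable_const _) hinvint ?_
      filter_upwards [h1tg] with θ hθ
      have hpos : (0:ℝ) < 1 + t * g θ := by linarith [hθ.1]
      calc (4/5 : ℝ) = (5/4 : ℝ)⁻¹ := by norm_num
        _ ≤ (1 + t * g θ)⁻¹ := inv_anti₀ hpos hθ.2
    calc (4/5 : ℝ) = (2 * π)⁻¹ * ((4/5) * (2 * π)) := by field_simp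
      _ ≤ (2 * π)⁻¹ * I1 := mul_le_mul_of_nonneg_left hmono hinv2π.le
  have htm : |t * m| ≤ 1/4 := by
    rw [abs_mul, ← hTdef]
    calc T * |m| ≤ T * M := mul_le_mul_of_nonneg_left hm_bound hT0
      _ ≤ 1/4 := htM
  have hA₂pos : (3/4 : ℝ) ≤ A₂ := by
    rw [hA₂def]
    rw [abs_le] at htm
    linarith [htm.1]
  -- rewrite deltaSym
  have hratio1 : (∫ θ in Icc (-π) π, f θ / (f θ + t * Δ θ)) = I1 := by
    rw [hI1def]
    refine integral_congr_ae ?_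
    filter_upwards [hf] with θ h1
    have hfne : f θ ≠ 0 := ne_of_gt (lt_of_lt_of_le hc h1.1)
    have hexp : f θ + t * Δ θ = f θ * (1 + t * g θ) := by
      rw [hgdef]
      field_simp
    rw [hexp, div_mul_cancel_left₀ hfne]
  have hratio2 : (∫ θ in Icc (-π) π, (f θ + t * Δ θ) / f θ) = ∫ θ, (1 + t * g θ) ∂μ := by
    refine integral_congr_ae ?_
    filter_upwards [hf] with θ h1
    have hfne : f θ ≠ 0 := ne_of_gt (lt_of_lt_of_le hc h1.1)
    rw [hgdef]
    field_simp
  have hδ : deltaSym f (fun θ => f θ + t * Δ θ) = Real.log (A₁ * A₂) := by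
    rw [deltaSym_eq_log_add_log]
    rw [hratio1, hratio2, hA₂eq, ← hA₁def,
      Real.log_mul (by linarith : A₁ ≠ 0) (by linarith : A₂ ≠ 0)]
  -- main estimate
  set u : ℝ := A₁ * A₂ - 1 with hudef
  have h1u : 1 + u = A₁ * A₂ := by rw [hudef]; ring
  have hQ : |s - m ^ 2| ≤ 2 * M ^ 2 := by
    have hm2 : |m ^ 2| ≤ M ^ 2 := by
      rw [abs_pow]
      exact pow_le_pow_left₀ (abs_nonneg _) hm_bound 2
    calc |s - m ^ 2| ≤ |s| + |m ^ 2| := abs_sub s (m ^ 2)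
      _ ≤ 2 * M ^ 2 := by linarith [hs_bound]
  have hu_quad : |u - t ^ 2 * (s - m ^ 2)| ≤ 8 * M ^ 3 * T ^ 3 := by
    have hid : u - t ^ 2 * (s - m ^ 2) =
        t ^ 3 * (s * m) + (A₁ - (1 - t * m + t ^ 2 * s)) * (1 + t * m) := by
      rw [hudef, hA₂def]
      ring
    have h1 : |t ^ 3 * (s * m)| ≤ M ^ 3 * T ^ 3 := by
      rw [abs_mul, abs_pow, abs_mul, ← hTdef]
      calc T ^ 3 * (|s| * |m|) ≤ T ^ 3 * (M ^ 2 * M) := by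
            refine mul_le_mul_of_nonneg_left ?_ (by positivity)
            exact mul_le_mul hs_bound hm_bound (abs_nonneg _) (by positivity)
        _ = M ^ 3 * T ^ 3 := by ring
    have h1tmabs : |1 + t * m| ≤ 5/4 := by
      calc |1 + t * m| ≤ |1| + |t * m| := abs_add_le 1 (t * m)
        _ ≤ 5/4 := by rw [abs_one]; linarith [htm]
    have h2 : |(A₁ - (1 - t * m + t ^ 2 * s)) * (1 + t * m)| ≤ 2 * M ^ 3 * T ^ 3 * (5/4) := by
      rw [abs_mul]
      exact mul_le_mul he h1tmabs (abs_nonneg _) (by positivity)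
    calc |u - t ^ 2 * (s - m ^ 2)| = |t ^ 3 * (s * m) +
          (A₁ - (1 - t * m + t ^ 2 * s)) * (1 + t * m)| := by rw [hid]
      _ ≤ |t ^ 3 * (s * m)| + |(A₁ - (1 - t * m + t ^ 2 * s)) * (1 + t * m)| := abs_add_le _ _
      _ ≤ M ^ 3 * T ^ 3 + 2 * M ^ 3 * T ^ 3 * (5/4) := by linarith
      _ ≤ 8 * M ^ 3 * T ^ 3 := by
          have h0 : 0 ≤ M ^ 3 * T ^ 3 := mul_nonneg (pow_pos hM0 3).le (pow_nonneg hT0 3)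
          linarith
  have huabs : |u| ≤ 4 * M ^ 2 * T ^ 2 := by
    have h1 : |t ^ 2 * (s - m ^ 2)| ≤ T ^ 2 * (2 * M ^ 2) := by
      rw [abs_mul, abs_pow, ← hTdef]
      exact mul_le_mul_of_nonneg_left hQ (by positivity)
    have h3 : 8 * M ^ 3 * T ^ 3 ≤ 2 * M ^ 2 * T ^ 2 := by
      have h0 : (0:ℝ) ≤ 2 * M ^ 2 * T ^ 2 := by positivity
      have h5 := mul_le_mul_of_nonneg_left h4MT h0
      have heq5 : 2 * M ^ 2 * T ^ 2 * (4 * M * T) = 8 * M ^ 3 * T ^ 3 := by ring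
      linarith
    calc |u| ≤ |u - t ^ 2 * (s - m ^ 2)| + |t ^ 2 * (s - m ^ 2)| := by
          have h6 := abs_add_le (u - t ^ 2 * (s - m ^ 2)) (t ^ 2 * (s - m ^ 2))
          have heq6 : u - t ^ 2 * (s - m ^ 2) + t ^ 2 * (s - m ^ 2) = u := by ring
          rwa [heq6] at h6
      _ ≤ 8 * M ^ 3 * T ^ 3 + T ^ 2 * (2 * M ^ 2) := by linarith [hu_quad]
      _ ≤ 4 * M ^ 2 * T ^ 2 := by linarith
  have hu14 : |u| ≤ 1/4 := by
    have hTM0 : 0 ≤ T * M := mul_nonneg hT0 hM0.le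
    have hsq : (T * M) * (T * M) ≤ (1/4) * (1/4) :=
      mul_le_mul htM htM hTM0 (by norm_num)
    have heq7 : (T * M) * (T * M) = M ^ 2 * T ^ 2 := by ring
    have : 4 * M ^ 2 * T ^ 2 ≤ 1/4 := by linarith
    linarith [huabs]
  have hu14' := abs_le.1 hu14
  have hlog := abs_log_one_add_sub_le u (by linarith [hu14'.1])
  have husq : 2 * u ^ 2 ≤ 8 * M ^ 3 * T ^ 3 := by
    have hu_sq : u ^ 2 ≤ (4 * M ^ 2 * T ^ 2) ^ 2 := by
      rw [← sq_abs u]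
      exact pow_le_pow_left₀ (abs_nonneg u) huabs 2
    have h8 : (0:ℝ) ≤ 8 * M ^ 3 * T ^ 3 := by positivity
    have h9 := mul_le_mul_of_nonneg_left h4MT h8
    have heq8 : 8 * M ^ 3 * T ^ 3 * (4 * M * T) = 32 * M ^ 4 * T ^ 4 := by ring
    have heq9 : 2 * (4 * M ^ 2 * T ^ 2) ^ 2 = 32 * M ^ 4 * T ^ 4 := by ring
    linarith
  -- conclude
  rw [hδ, ← h1u]
  calc |Real.log (1 + u) - t ^ 2 * (s - m ^ 2)|
      ≤ |Real.log (1 + u) - u| + |u - t ^ 2 * (s - m ^ 2)| := by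
        have heq10 : Real.log (1 + u) - t ^ 2 * (s - m ^ 2) =
            (Real.log (1 + u) - u) + (u - t ^ 2 * (s - m ^ 2)) := by ring
        rw [heq10]; exact abs_add_le _ _
    _ ≤ 2 * u ^ 2 + 8 * M ^ 3 * T ^ 3 := by linarith [hlog, hu_quad]
    _ ≤ 8 * M ^ 3 * T ^ 3 + 8 * M ^ 3 * T ^ 3 := by linarith [husq]
    _ = 16 * M ^ 3 * T ^ 3 := by ring
end

section
/- Let f, Δ : [-π, π] → ℝ be measurable with 0 < c ≤ f(θ) ≤ C and |Δ(θ)| ≤ C almost everywhere for some constants c, C. Set Q := (1/2π)∫_{-π}^{π} (Δ(θ)/f(θ))² dθ − ((1/2π)∫_{-π}^{π} Δ(θ)/f(θ) dθ)². Then there exist constants K > 0 and t0 > 0 such that for all real t with |t| ≤ t0 one has |δ_{a/g}(f, f + tΔ) − (t²/2)·Q| ≤ K·|t|³; that is, δ_{a/g}(f, f + tΔ) = (t²/2)·Q + O(|t|³) as t → 0. -/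
open MeasureTheory Real Set

lemma aux_inv {x : ℝ} (hx : |x| ≤ 1/2) : |(1+x)⁻¹ - (1 - x + x^2)| ≤ 2*|x|^3 := by
  have h1 : (1:ℝ)/2 ≤ 1 + x := by
    rcases abs_le.1 hx with ⟨h, _⟩; linarith
  have h0 : (1:ℝ) + x ≠ 0 := by positivity
  have he : (1+x)⁻¹ - (1 - x + x^2) = -x^3/(1+x) := by field_simp; ring
  rw [he, abs_div, abs_neg, abs_pow]
  rw [div_le_iff₀ (by positivity : (0:ℝ) < |1+x|)]
  have : (1:ℝ)/2 ≤ |1+x| := le_trans h1 (le_abs_self _)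
  nlinarith [abs_nonneg x, pow_nonneg (abs_nonneg x) 3]

lemma aux_log {x : ℝ} (hx : |x| ≤ 1/2) : |Real.log (1+x) - (x - x^2/2)| ≤ 2*|x|^3 := by
  have h := Real.abs_log_sub_add_sum_range_le (x := -x) (by rw [abs_neg]; linarith [abs_nonneg x]) 2
  simp [Finset.sum_range_succ] at h
  have h2 : |x| ^ 3 / (1 - |x|) ≤ 2 * |x|^3 := by
    rw [div_le_iff₀ (by linarith)]
    nlinarith [pow_nonneg (abs_nonneg x) 3]
  have e : Real.log (1+x) - (x - x^2/2) = -x + x^2/(1+1) + Real.log (1+x) := by ring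
  rw [e]; exact le_trans h h2

set_option maxHeartbeats 1000000 in
/-- Second-order expansion of `δ_{a/g}`:
`δ_{a/g}(f, f + tΔ) = (t²/2)·Q + O(|t|³)` as `t → 0`, where
`Q = (1/2π)∫ (Δ/f)² dθ − ((1/2π)∫ Δ/f dθ)²`. -/
theorem deltaAG_quadratic_expansion (f Δ : ℝ → ℝ) (c C : ℝ) (hc : 0 < c)
    (hmf : Measurable f) (hmΔ : Measurable Δ)
    (hf : ∀ᵐ θ ∂(volume.restrict (Icc (-π) π)), c ≤ f θ ∧ f θ ≤ C)
    (hΔ : ∀ᵐ θ ∂(volume.restrict (Icc (-π) π)), |Δ θ| ≤ C) :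
    ∃ K > (0 : ℝ), ∃ t0 > (0 : ℝ), ∀ t : ℝ, |t| ≤ t0 →
      |deltaAG f (fun θ => f θ + t * Δ θ) -
          t ^ 2 / 2 * (((2 * π)⁻¹ * ∫ θ in Icc (-π) π, (Δ θ / f θ) ^ 2) -
            ((2 * π)⁻¹ * ∫ θ in Icc (-π) π, Δ θ / f θ) ^ 2)| ≤ K * |t| ^ 3 := by
  have hπ : (0:ℝ) < π := Real.pi_pos
  have h2π : (0:ℝ) < 2*π := by linarith
  set μ := volume.restrict (Icc (-π) π) with hμdef
  haveI hfinμ : IsFiniteMeasure μ := by rw [hμdef]; infer_instance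
  have hμuniv : (μ Set.univ).toReal = 2*π := by
    rw [hμdef, Measure.restrict_apply_univ, Real.volume_Icc,
      ENNReal.toReal_ofReal (by linarith)]
    ring
  have hμne : μ ≠ 0 := by
    intro h0
    rw [h0] at hμuniv
    simp at hμuniv
  haveI : (ae μ).NeBot := ae_neBot.2 hμne
  clear_value μ
  obtain ⟨θ₀, hθ₁, hθ₂⟩ := (hf.and hΔ).exists
  have hcC : c ≤ C := hθ₁.1.trans hθ₁.2
  set M := C / c with hMdef
  have hC0 : 0 < C := lt_of_lt_of_le hc hcC
  have hMpos : 0 < M := div_pos hC0 hc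
  have hM : 1 ≤ M := (one_le_div hc).2 hcC
  have hM3 : (1:ℝ) ≤ M^3 := by
    calc (1:ℝ) = 1^3 := by norm_num
      _ ≤ M^3 := pow_le_pow_left₀ (by norm_num) hM 3
  have hM3pos : (0:ℝ) < M^3 := by positivity
  clear_value M
  -- mean bound helper
  have hmean : ∀ (h : ℝ → ℝ) (B : ℝ), (∀ᵐ θ ∂μ, |h θ| ≤ B) →
      |(2*π)⁻¹ * ∫ θ, h θ ∂μ| ≤ B := by
    intro h B hb
    have h1 : ‖∫ θ, h θ ∂μ‖ ≤ B * (μ Set.univ).toReal :=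
      norm_integral_le_of_norm_le_const (by simpa [Real.norm_eq_abs] using hb)
    rw [Real.norm_eq_abs, hμuniv] at h1
    rw [abs_mul, abs_inv, abs_of_pos h2π, inv_mul_le_iff₀ h2π]
    linarith
  -- integrability helper
  have hbint : ∀ (h : ℝ → ℝ) (B : ℝ), Measurable h → (∀ᵐ θ ∂μ, |h θ| ≤ B) →
      Integrable h μ := by
    intro h B mh hb
    exact (integrable_const B).mono' mh.aestronglyMeasurable
      (by simpa [Real.norm_eq_abs] using hb)
  set m1 := (2*π)⁻¹ * ∫ θ, Δ θ / f θ ∂μ with hm1def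
  set m2 := (2*π)⁻¹ * ∫ θ, (Δ θ / f θ)^2 ∂μ with hm2def
  clear_value m1 m2
  refine ⟨200*M^9, by nlinarith [pow_pos hMpos 9], 1/(8*M^3), one_div_pos.2 (by nlinarith [pow_pos hMpos 3]), ?_⟩
  intro t ht
  have ht1 : |t| ≤ 1 := by
    refine ht.trans ?_
    rw [div_le_one (by positivity)]
    linarith [hM3]
  have htM3 : |t| * M^3 ≤ 1/8 := by
    calc |t| * M^3 ≤ (1/(8*M^3)) * M^3 := by gcongr
      _ = 1/8 := by field_simp
  have htM : |t| * M ≤ 1/8 := by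
    calc |t| * M ≤ |t| * M^3 := by
          gcongr
          exact le_self_pow₀ hM (by norm_num)
      _ ≤ 1/8 := htM3
  -- core a.e. facts
  have hcore : ∀ᵐ θ ∂μ, |Δ θ / f θ| ≤ M ∧ |t * (Δ θ / f θ)| ≤ 1/8 ∧
      f θ / (f θ + t * Δ θ) = (1 + t * (Δ θ / f θ))⁻¹ ∧
      Real.log (f θ / (f θ + t * Δ θ)) = -Real.log (1 + t * (Δ θ / f θ)) := by
    filter_upwards [hf, hΔ] with θ hfθ hΔθ
    have hfpos : 0 < f θ := lt_of_lt_of_le hc hfθ.1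
    have hgM : |Δ θ / f θ| ≤ M := by
      rw [abs_div, abs_of_pos hfpos, hMdef]
      exact div_le_div₀ (le_trans hc.le hcC) hΔθ hc hfθ.1
    have hx : |t * (Δ θ / f θ)| ≤ 1/8 := by
      rw [abs_mul]
      calc |t| * |Δ θ / f θ| ≤ |t| * M := by gcongr
        _ ≤ 1/8 := htM
    have hx2 : (1:ℝ)/2 ≤ 1 + t * (Δ θ / f θ) := by
      rcases abs_le.1 hx with ⟨h, _⟩; linarith
    have hpos2 : (0:ℝ) < 1 + t * (Δ θ / f θ) := by linarith
    have hden : f θ + t * Δ θ = f θ * (1 + t * (Δ θ / f θ)) := by field_simp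
    have hq : f θ / (f θ + t * Δ θ) = (1 + t * (Δ θ / f θ))⁻¹ := by
      rw [hden, ← div_div, div_self hfpos.ne', one_div]
    exact ⟨hgM, hx, hq, by rw [hq, Real.log_inv]⟩
  have hg_ae : ∀ᵐ θ ∂μ, |Δ θ / f θ| ≤ M := hcore.mono fun θ h => h.1
  have hg2_ae : ∀ᵐ θ ∂μ, |(Δ θ / f θ)^2| ≤ M^2 := by
    filter_upwards [hg_ae] with θ h
    rw [abs_pow]
    exact pow_le_pow_left₀ (abs_nonneg _) h 2
  have hh_ae : ∀ᵐ θ ∂μ, |f θ / (f θ + t * Δ θ)| ≤ 2 := by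
    filter_upwards [hcore] with θ ⟨hgM, hx, hq, _⟩
    rw [hq]
    have hx2 : (1:ℝ)/2 ≤ 1 + t * (Δ θ / f θ) := by
      rcases abs_le.1 hx with ⟨h, _⟩; linarith
    have hpos2 : (0:ℝ) < 1 + t * (Δ θ / f θ) := by linarith
    rw [abs_of_pos (inv_pos.2 hpos2)]
    rw [inv_le_comm₀ hpos2 (by norm_num)]
    linarith
  have hl_ae : ∀ᵐ θ ∂μ, |Real.log (f θ / (f θ + t * Δ θ))| ≤ 1 := by
    filter_upwards [hcore] with θ ⟨hgM, hx, hq, hlog⟩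
    rw [hlog]
    rcases abs_le.1 hx with ⟨hx1, hx2⟩
    have hpos2 : (0:ℝ) < 1 + t * (Δ θ / f θ) := by linarith
    have hupper : Real.log (1 + t * (Δ θ / f θ)) ≤ 1 := by
      have := Real.log_le_sub_one_of_pos hpos2
      linarith
    have hlower : -1 ≤ Real.log (1 + t * (Δ θ / f θ)) := by
      have hinvpos : (0:ℝ) < (1 + t * (Δ θ / f θ))⁻¹ := inv_pos.2 hpos2
      have h1 := Real.log_le_sub_one_of_pos hinvpos
      have h2 : (1 + t * (Δ θ / f θ))⁻¹ ≤ 2 := by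
        rw [inv_le_comm₀ hpos2 (by norm_num)]; linarith
      rw [Real.log_inv] at h1
      linarith
    rw [abs_le]
    constructor <;> linarith
  -- error bounds a.e.
  have hr_ae : ∀ᵐ θ ∂μ, |f θ / (f θ + t * Δ θ) -
      (1 - t * (Δ θ / f θ) + t^2 * (Δ θ / f θ)^2)| ≤ 2*M^3*|t|^3 := by
    filter_upwards [hcore] with θ ⟨hgM, hx, hq, _⟩
    rw [hq]
    have h := aux_inv (x := t * (Δ θ / f θ)) (hx.trans (by norm_num))
    rw [show (t * (Δ θ / f θ))^2 = t^2 * (Δ θ / f θ)^2 from by ring] at h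
    refine h.trans ?_
    calc 2*|t * (Δ θ / f θ)|^3 = 2*(|t| * |Δ θ / f θ|)^3 := by rw [abs_mul]
      _ ≤ 2*(|t| * M)^3 := by gcongr
      _ = 2*M^3*|t|^3 := by ring
  have hs_ae : ∀ᵐ θ ∂μ, |Real.log (f θ / (f θ + t * Δ θ)) +
      (t * (Δ θ / f θ) - t^2 * (Δ θ / f θ)^2 / 2)| ≤ 2*M^3*|t|^3 := by
    filter_upwards [hcore] with θ ⟨hgM, hx, hq, hlog⟩
    rw [hlog]
    have h := aux_log (x := t * (Δ θ / f θ)) (hx.trans (by norm_num))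
    rw [show -Real.log (1 + t * (Δ θ / f θ)) + (t * (Δ θ / f θ) - t^2 * (Δ θ / f θ)^2 / 2)
        = -(Real.log (1 + t * (Δ θ / f θ)) -
          (t * (Δ θ / f θ) - (t * (Δ θ / f θ))^2/2)) from by ring, abs_neg]
    refine h.trans ?_
    calc 2*|t * (Δ θ / f θ)|^3 = 2*(|t| * |Δ θ / f θ|)^3 := by rw [abs_mul]
      _ ≤ 2*(|t| * M)^3 := by gcongr
      _ = 2*M^3*|t|^3 := by ring
  -- integrability
  have int_g : Integrable (fun θ => Δ θ / f θ) μ := hbint _ M (hmΔ.div hmf) hg_ae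
  have int_g2 : Integrable (fun θ => (Δ θ / f θ)^2) μ :=
    hbint _ (M^2) ((hmΔ.div hmf).pow_const 2) hg2_ae
  have mh : Measurable (fun θ => f θ / (f θ + t * Δ θ)) :=
    hmf.div (hmf.add (measurable_const.mul hmΔ))
  have int_h : Integrable (fun θ => f θ / (f θ + t * Δ θ)) μ := hbint _ 2 mh hh_ae
  have int_l : Integrable (fun θ => Real.log (f θ / (f θ + t * Δ θ))) μ :=
    hbint _ 1 mh.log hl_ae
  have int_poly : Integrable (fun θ => 1 - t * (Δ θ / f θ) + t^2 * (Δ θ / f θ)^2) μ :=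
    ((integrable_const 1).sub (int_g.const_mul t)).add (int_g2.const_mul (t^2))
  have int_poly2 : Integrable (fun θ => t * (Δ θ / f θ) - t^2 * (Δ θ / f θ)^2 / 2) μ :=
    (int_g.const_mul t).sub ((int_g2.const_mul (t^2)).div_const 2)
  have int_c1 : Integrable (fun _ : ℝ => (1:ℝ)) μ := integrable_const 1
  have int_tg : Integrable (fun θ => t * (Δ θ / f θ)) μ := int_g.const_mul t
  have int_t2g2 : Integrable (fun θ => t^2 * (Δ θ / f θ)^2) μ := int_g2.const_mul (t^2)
  have int_b2 : Integrable (fun θ => t^2 * (Δ θ / f θ)^2 / 2) μ := int_t2g2.div_const 2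
  have int_a : Integrable (fun θ => 1 - t * (Δ θ / f θ)) μ := int_c1.sub int_tg
  -- integral identities
  have e_r : ∫ θ, (f θ / (f θ + t * Δ θ) -
      (1 - t * (Δ θ / f θ) + t^2 * (Δ θ / f θ)^2)) ∂μ
      = (∫ θ, f θ / (f θ + t * Δ θ) ∂μ) -
        (2*π - t * (∫ θ, Δ θ / f θ ∂μ) + t^2 * (∫ θ, (Δ θ / f θ)^2 ∂μ)) := by
    rw [integral_sub int_h int_poly, integral_add int_a int_t2g2,
      integral_sub int_c1 int_tg,
      integral_const_mul, integral_const_mul, integral_const, smul_eq_mul, measureReal_def, hμuniv]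
    ring
  have e_s : ∫ θ, (Real.log (f θ / (f θ + t * Δ θ)) +
      (t * (Δ θ / f θ) - t^2 * (Δ θ / f θ)^2 / 2)) ∂μ
      = (∫ θ, Real.log (f θ / (f θ + t * Δ θ)) ∂μ) +
        (t * (∫ θ, Δ θ / f θ ∂μ) - t^2 * (∫ θ, (Δ θ / f θ)^2 ∂μ) / 2) := by
    rw [integral_add int_l int_poly2, integral_sub int_tg int_b2,
      integral_const_mul, integral_div, integral_const_mul]
  set R1 := (2*π)⁻¹ * ∫ θ, (f θ / (f θ + t * Δ θ) -
      (1 - t * (Δ θ / f θ) + t^2 * (Δ θ / f θ)^2)) ∂μ with hR1def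
  set R2 := (2*π)⁻¹ * ∫ θ, (Real.log (f θ / (f θ + t * Δ θ)) +
      (t * (Δ θ / f θ) - t^2 * (Δ θ / f θ)^2 / 2)) ∂μ with hR2def
  clear_value R1 R2
  have hR1bd : |R1| ≤ 2*M^3*|t|^3 := by rw [hR1def]; exact hmean _ _ hr_ae
  have hR2bd : |R2| ≤ 2*M^3*|t|^3 := by rw [hR2def]; exact hmean _ _ hs_ae
  have hm1bd : |m1| ≤ M := by rw [hm1def]; exact hmean _ _ hg_ae
  have hm2bd : |m2| ≤ M^2 := by rw [hm2def]; exact hmean _ _ hg2_ae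
  set u := -(t*m1) + t^2*m2 + R1 with hudef
  clear_value u
  have hA' : (2*π)⁻¹ * (∫ θ, f θ / (f θ + t * Δ θ) ∂μ) = 1 + u := by
    rw [hudef, hR1def, hm1def, hm2def, e_r]
    have h2πinv : (2*π)⁻¹ * (2*π) = 1 := inv_mul_cancel₀ (ne_of_gt h2π)
    linear_combination h2πinv
  have hL : (2*π)⁻¹ * (∫ θ, Real.log (f θ / (f θ + t * Δ θ)) ∂μ)
      = -(t*m1) + t^2/2*m2 + R2 := by
    rw [hR2def, hm1def, hm2def, e_s]
    ring
  -- bounds on u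
  have hu_abs : |u| ≤ 4*M^3*|t| := by
    have h3 : |u| ≤ |(-(t*m1))| + |t^2*m2| + |R1| := by
      rw [hudef]
      refine le_trans (abs_add_le _ _) ?_
      linarith [abs_add_le (-(t*m1)) (t^2*m2)]
    rw [abs_neg, abs_mul, abs_mul, abs_pow] at h3
    have c1 : |t| * |m1| ≤ |t| * M^3 := by
      calc |t| * |m1| ≤ |t| * M := by gcongr
        _ ≤ |t| * M^3 := by gcongr; exact le_self_pow₀ hM (by norm_num)
    have htsq : |t|^2 ≤ |t| := by
      calc |t|^2 ≤ |t|^1 := pow_le_pow_of_le_one (abs_nonneg t) ht1 (by norm_num)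
        _ = |t| := pow_one _
    have htcb : |t|^3 ≤ |t| := by
      calc |t|^3 ≤ |t|^1 := pow_le_pow_of_le_one (abs_nonneg t) ht1 (by norm_num)
        _ = |t| := pow_one _
    have c2 : |t|^2 * |m2| ≤ |t| * M^3 := by
      calc |t|^2 * |m2| ≤ |t|^2 * M^2 := by gcongr
        _ ≤ |t| * M^2 := mul_le_mul_of_nonneg_right htsq (by positivity)
        _ ≤ |t| * M^3 := mul_le_mul_of_nonneg_left (pow_le_pow_right₀ hM (by norm_num)) (abs_nonneg t)
    have c3 : |R1| ≤ 2*(M^3*|t|) := by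
      refine hR1bd.trans ?_
      calc 2*M^3*|t|^3 ≤ 2*M^3*|t| := mul_le_mul_of_nonneg_left htcb (by positivity)
        _ = 2*(M^3*|t|) := by ring
    linarith
  have hu_half : |u| ≤ 1/2 := by
    refine hu_abs.trans ?_
    calc 4*M^3*|t| = 4*(|t| * M^3) := by ring
      _ ≤ 4*(1/8) := by linarith
      _ = 1/2 := by norm_num
  set X := Real.log (1+u) - (u - u^2/2) with hXdef
  clear_value X
  have hXbd : |X| ≤ 128*M^9*|t|^3 := by
    have h := aux_log hu_half
    rw [← hXdef] at h
    refine h.trans ?_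
    calc 2*|u|^3 ≤ 2*(4*M^3*|t|)^3 := by gcongr
      _ = 128*M^9*|t|^3 := by ring
  -- goal manipulation
  simp only [deltaAG]
  rw [← hμdef, hA', hL]
  have efinal : Real.log (1+u) - (-(t*m1) + t^2/2*m2 + R2) - t^2/2*(m2 - m1^2)
      = X + R1 - (t^2*m2 + R1)*(u - t*m1)/2 - R2 := by
    rw [hXdef, hudef]
    ring
  rw [show Real.log (1 + u) - (-(t * m1) + t ^ 2 / 2 * m2 + R2) -
      t ^ 2 / 2 * (m2 - m1 ^ 2) = X + R1 - (t^2*m2 + R1)*(u - t*m1)/2 - R2 from efinal]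
  -- final bound
  have hA1 : |t^2*m2 + R1| ≤ 3*M^3*|t|^2 := by
    refine le_trans (abs_add_le _ _) ?_
    rw [abs_mul, abs_pow]
    have c1 : |t|^2 * |m2| ≤ |t|^2 * M^3 := by
      gcongr
      calc |m2| ≤ M^2 := hm2bd
        _ ≤ M^3 := pow_le_pow_right₀ hM (by norm_num)
    have c2 : |R1| ≤ 2*M^3*|t|^2 :=
      hR1bd.trans (mul_le_mul_of_nonneg_left
        (pow_le_pow_of_le_one (abs_nonneg t) ht1 (by norm_num)) (by positivity))
    linarith
  have hA2 : |u - t*m1| ≤ 5*M^3*|t| := by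
    have h1 : |u - t*m1| ≤ |u| + |t*m1| := by
      rw [sub_eq_add_neg]
      refine le_trans (abs_add_le _ _) ?_
      rw [abs_neg]
    rw [abs_mul] at h1
    have c1 : |t| * |m1| ≤ |t| * M^3 := by
      calc |t| * |m1| ≤ |t| * M := by gcongr
        _ ≤ |t| * M^3 := by gcongr; exact le_self_pow₀ hM (by norm_num)
    linarith [hu_abs]
  have hprod : |(t^2*m2 + R1)*(u - t*m1)| ≤ 15*M^6*|t|^3 := by
    rw [abs_mul]
    refine le_trans (mul_le_mul hA1 hA2 (abs_nonneg _) (by positivity)) (le_of_eq (by ring))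
  have tri : |X + R1 - (t^2*m2 + R1)*(u - t*m1)/2 - R2|
      ≤ |X| + |R1| + |(t^2*m2 + R1)*(u - t*m1)|/2 + |R2| := by
    have e : X + R1 - (t^2*m2 + R1)*(u - t*m1)/2 - R2
        = (X + R1) + (-((t^2*m2 + R1)*(u - t*m1)/2) + -R2) := by ring
    rw [e]
    refine le_trans (abs_add_le _ _) ?_
    have h1 := abs_add_le X R1
    have h2 := abs_add_le (-((t^2*m2 + R1)*(u - t*m1)/2)) (-R2)
    rw [abs_neg, abs_neg, abs_div] at h2
    simp only [abs_two] at h2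
    linarith
  refine tri.trans ?_
  have p1 : M^3*|t|^3 ≤ M^9*|t|^3 :=
    mul_le_mul_of_nonneg_right (pow_le_pow_right₀ hM (by norm_num)) (pow_nonneg (abs_nonneg t) 3)
  have p2 : M^6*|t|^3 ≤ M^9*|t|^3 :=
    mul_le_mul_of_nonneg_right (pow_le_pow_right₀ hM (by norm_num)) (pow_nonneg (abs_nonneg t) 3)
  have q0 : (0:ℝ) ≤ M^9*|t|^3 := by positivity
  linarith [hXbd, hR1bd, hR2bd, hprod, p1, p2, q0]
end
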